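/- arXiv:1504.03138 — 6 statements merged into one kernel-verified Lean document; each statement's English description precedes it below -/
import Mathlib

section
/- Let X be a set, ξ : X → ℕ finitely supported, and A a nonempty set of finitely supported functions X → ℕ. Call a function w from the finitely supported functions X → ℕ to [0,1], with finite support contained in A and total mass Σ_ν w(ν) = 1, a finitely supported probability weight on A. Then d_T(ξ, A) = sup_{u : Σ_x ξ(x)·u(x)² ≤ 1} inf_{w} Σ_{x ∈ supp ξ} u(x)·(Σ_ν w(ν)·max(ξ(x) − ν(x), 0)) = inf_{w} sup_{u : Σ_x ξ(x)·u(x)² ≤ 1} Σ_{x ∈ supp ξ} u(x)·(Σ_ν w(ν)·max(ξ(x) − ν(x), 0)), where w ranges over finitely supported probability weights on A and u over functions X → ℝ. -/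
/-- The convex distance of a finite point configuration `ξ` (a finitely supported
function `X → ℕ`) to a set `A` of configurations:
`d_T(ξ, A) = sup_{‖u‖_ξ ≤ 1} inf_{ν ∈ A} Σ_{x ∈ supp ξ} u(x)·(ξ(x) − ν(x))₊`. -/
noncomputable def convexDist {X : Type*} (ξ : X →₀ ℕ) (A : Set (X →₀ ℕ)) : ℝ :=
  sSup {r : ℝ | ∃ u : X → ℝ,
    (∑ x ∈ ξ.support, (ξ x : ℝ) * u x ^ 2) ≤ 1 ∧
    r = sInf {s : ℝ | ∃ ν ∈ A,
      s = ∑ x ∈ ξ.support, u x * max ((ξ x : ℝ) - (ν x : ℝ)) 0}}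

/-- A finitely supported probability weight on `A`: a `[0,1]`-valued finitely
supported function on configurations, with support contained in `A` and total
mass `1`. -/
def IsProbWeight {X : Type*} (A : Set (X →₀ ℕ)) (w : (X →₀ ℕ) →₀ ℝ) : Prop :=
  (∀ ν, 0 ≤ w ν) ∧ (∀ ν, w ν ≤ 1) ∧ (↑w.support ⊆ A) ∧ (∑ ν ∈ w.support, w ν = 1)

open Finset
open scoped RealInnerProductSpace Classical

namespace CDMinimaxAux


section Abstract
variable {E : Type*} [NormedAddCommGroup E] [InnerProductSpace ℝ E]

lemma sSup_inner_unit_ball (c : E) :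
    sSup {s : ℝ | ∃ v : E, ‖v‖ ≤ 1 ∧ s = ⟪v, c⟫} = ‖c‖ := by
  have hub : ∀ s ∈ {s : ℝ | ∃ v : E, ‖v‖ ≤ 1 ∧ s = ⟪v, c⟫}, s ≤ ‖c‖ := by
    rintro s ⟨v, hv, rfl⟩
    calc ⟪v, c⟫ ≤ ‖v‖ * ‖c‖ := real_inner_le_norm v c
      _ ≤ 1 * ‖c‖ := mul_le_mul_of_nonneg_right hv (norm_nonneg c)
      _ = ‖c‖ := one_mul _
  refine le_antisymm (csSup_le ⟨0, 0, by simp⟩ hub) ?_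
  rcases eq_or_ne c 0 with rfl | hc
  · refine le_csSup ⟨‖(0:E)‖, fun s hs => hub s hs⟩ ⟨0, by simp⟩
  · refine le_csSup ⟨‖c‖, hub⟩ ⟨‖c‖⁻¹ • c, ?_, ?_⟩
    · rw [norm_smul, norm_inv, norm_norm, inv_mul_cancel₀ (norm_ne_zero_iff.mpr hc)]
    · rw [real_inner_smul_left, real_inner_self_eq_norm_sq]
      field_simp [pow_two]

lemma minimax_ball [CompleteSpace E] (C : Set E) (hC : Convex ℝ C) (hne : C.Nonempty)
    (M : ℝ) (hM : ∀ c ∈ C, ‖c‖ ≤ M) :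
    sSup {r : ℝ | ∃ v : E, ‖v‖ ≤ 1 ∧ r = sInf {s : ℝ | ∃ c ∈ C, s = ⟪v, c⟫}} =
    sInf {r : ℝ | ∃ c ∈ C, r = ‖c‖} := by
  set L := {r : ℝ | ∃ v : E, ‖v‖ ≤ 1 ∧ r = sInf {s : ℝ | ∃ c ∈ C, s = ⟪v, c⟫}} with hL
  set R := {r : ℝ | ∃ c ∈ C, r = ‖c‖} with hR
  have hRne : R.Nonempty := ⟨‖hne.choose‖, hne.choose, hne.choose_spec, rfl⟩
  have hRbdd : BddBelow R := ⟨0, by rintro r ⟨c, _, rfl⟩; exact norm_nonneg c⟩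
  have hSvne : ∀ v : E, {s : ℝ | ∃ c ∈ C, s = ⟪v, c⟫}.Nonempty :=
    fun v => ⟨⟪v, hne.choose⟫, hne.choose, hne.choose_spec, rfl⟩
  have hSvbdd : ∀ v : E, ‖v‖ ≤ 1 → BddBelow {s : ℝ | ∃ c ∈ C, s = ⟪v, c⟫} := by
    intro v hv
    refine ⟨-M, ?_⟩
    rintro s ⟨c, hc, rfl⟩
    have h1 : |⟪v, c⟫| ≤ ‖v‖ * ‖c‖ := abs_real_inner_le_norm v c
    have h2 : ‖v‖ * ‖c‖ ≤ 1 * M :=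
      mul_le_mul hv (hM c hc) (norm_nonneg c) zero_le_one
    have := neg_abs_le ⟪v, c⟫
    simp only [one_mul] at h2
    linarith
  have hLmem : ∀ r ∈ L, ∀ c ∈ C, r ≤ ‖c‖ := by
    rintro r ⟨v, hv, rfl⟩ c hc
    calc sInf {s : ℝ | ∃ c ∈ C, s = ⟪v, c⟫} ≤ ⟪v, c⟫ :=
          csInf_le (hSvbdd v hv) ⟨c, hc, rfl⟩
      _ ≤ ‖v‖ * ‖c‖ := real_inner_le_norm v c
      _ ≤ 1 * ‖c‖ := mul_le_mul_of_nonneg_right hv (norm_nonneg c)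
      _ = ‖c‖ := one_mul _
  have hLne : L.Nonempty := ⟨_, 0, by simp, rfl⟩
  have hLbdd : BddAbove L :=
    ⟨‖hne.choose‖, fun r hr => hLmem r hr hne.choose hne.choose_spec⟩
  refine le_antisymm (csSup_le hLne ?_) ?_
  · intro r hr
    exact le_csInf hRne (by rintro b ⟨c, hc, rfl⟩; exact hLmem r hr c hc)
  · -- projection argument
    obtain ⟨p, hpK, hproj⟩ := exists_norm_eq_iInf_of_complete_convex
      (hne.mono subset_closure) isClosed_closure.isComplete hC.closure (0 : E)
    have hineq : ∀ c ∈ closure C, ⟪(0:E) - p, c - p⟫ ≤ 0 :=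
      (norm_eq_iInf_iff_real_inner_le_zero hC.closure hpK).mp hproj
    have hkey : ∀ c ∈ C, ‖p‖ ^ 2 ≤ ⟪p, c⟫ := by
      intro c hc
      have := hineq c (subset_closure hc)
      rw [zero_sub, inner_neg_left, inner_sub_right, real_inner_self_eq_norm_sq] at this
      linarith
    have hRp : sInf R ≤ ‖p‖ := by
      refine le_of_forall_pos_le_add ?_
      intro ε hε
      obtain ⟨c, hcC, hcd⟩ := Metric.mem_closure_iff.mp hpK ε hε
      have : ‖c‖ ≤ ‖p‖ + ε := by
        have := norm_sub_norm_le c p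
        rw [dist_comm, dist_eq_norm] at hcd
        linarith
      exact le_trans (csInf_le hRbdd ⟨c, hcC, rfl⟩) this
    rcases eq_or_ne p 0 with rfl | hp
    · have h0 : (0:ℝ) ∈ L := by
        refine ⟨0, by simp, ?_⟩
        have : {s : ℝ | ∃ c ∈ C, s = ⟪(0:E), c⟫} = {0} := by
          ext s
          constructor
          · rintro ⟨c, _, rfl⟩; simp
          · rintro rfl; exact ⟨hne.choose, hne.choose_spec, by simp⟩
        rw [this, csInf_singleton]
      calc sInf R ≤ ‖(0:E)‖ := hRp
        _ = 0 := norm_zero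
        _ ≤ sSup L := le_csSup hLbdd h0
    · set v := ‖p‖⁻¹ • p with hv
      have hpn : (0:ℝ) < ‖p‖ := norm_pos_iff.mpr hp
      have hvn : ‖v‖ ≤ 1 := by
        rw [hv, norm_smul, norm_inv, norm_norm, inv_mul_cancel₀ hpn.ne']
      have hrL : sInf {s : ℝ | ∃ c ∈ C, s = ⟪v, c⟫} ∈ L := ⟨v, hvn, rfl⟩
      have hge : ‖p‖ ≤ sInf {s : ℝ | ∃ c ∈ C, s = ⟪v, c⟫} := by
        refine le_csInf (hSvne v) ?_
        rintro s ⟨c, hc, rfl⟩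
        rw [hv, real_inner_smul_left]
        have h1 := mul_le_mul_of_nonneg_left (hkey c hc) (inv_nonneg.mpr hpn.le)
        have h2 : ‖p‖⁻¹ * ‖p‖ ^ 2 = ‖p‖ := by field_simp [pow_two]
        linarith
      calc sInf R ≤ ‖p‖ := hRp
        _ ≤ _ := hge
        _ ≤ sSup L := le_csSup hLbdd hrL

end Abstract

section Translate
variable {X : Type*}


noncomputable def gfun (ξ : X →₀ ℕ) (w : (X →₀ ℕ) →₀ ℝ) (x : X) : ℝ :=
  ∑ ν ∈ w.support, w ν * max ((ξ x : ℝ) - (ν x : ℝ)) 0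

noncomputable def phi (ξ : X →₀ ℕ) (w : (X →₀ ℕ) →₀ ℝ) : EuclideanSpace ℝ ↥ξ.support :=
  WithLp.toLp 2 (fun x => (Real.sqrt (ξ (x : X)))⁻¹ * gfun ξ w (x : X))

lemma one_le_cast_of_mem {ξ : X →₀ ℕ} {x : X} (hx : x ∈ ξ.support) : (1 : ℝ) ≤ (ξ x : ℝ) := by
  exact_mod_cast Nat.one_le_iff_ne_zero.mpr (Finsupp.mem_support_iff.mp hx)

lemma sqrt_one_le {ξ : X →₀ ℕ} {x : X} (hx : x ∈ ξ.support) : 1 ≤ Real.sqrt (ξ x) := by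
  rw [show (1:ℝ) = Real.sqrt 1 by simp]
  exact Real.sqrt_le_sqrt (one_le_cast_of_mem hx)

lemma sqrt_ne_zero_of_mem {ξ : X →₀ ℕ} {x : X} (hx : x ∈ ξ.support) :
    Real.sqrt (ξ x) ≠ 0 := by linarith [sqrt_one_le hx]

lemma euc_inner {n : Type*} [Fintype n] (v c : EuclideanSpace ℝ n) :
    ⟪v, c⟫ = ∑ i, v i * c i := by
  simp [PiLp.inner_apply, RCLike.inner_apply, conj_trivial]
  exact Finset.sum_congr rfl fun _ _ => mul_comm _ _

lemma exists_v (ξ : X →₀ ℕ) (u : X → ℝ)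
    (hu : ∑ x ∈ ξ.support, (ξ x : ℝ) * u x ^ 2 ≤ 1) :
    ∃ v : EuclideanSpace ℝ ↥ξ.support, ‖v‖ ≤ 1 ∧
      ∀ w : (X →₀ ℕ) →₀ ℝ,
        (∑ x ∈ ξ.support, u x * gfun ξ w x) = ⟪v, phi ξ w⟫ := by
  refine ⟨WithLp.toLp 2 (fun x => Real.sqrt (ξ (x : X)) * u (x : X)), ?_, ?_⟩
  · rw [EuclideanSpace.norm_eq]
    have h1 : ∑ x : ↥ξ.support,
        ‖(fun x : ↥ξ.support => Real.sqrt (ξ (x : X)) * u (x : X)) x‖ ^ 2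
        = ∑ x ∈ ξ.support, (ξ x : ℝ) * u x ^ 2 := by
      rw [← Finset.sum_coe_sort ξ.support (fun x => (ξ x : ℝ) * u x ^ 2)]
      refine Finset.sum_congr rfl fun x _ => ?_
      rw [Real.norm_eq_abs, sq_abs, mul_pow, Real.sq_sqrt (by positivity)]
    rw [show (1:ℝ) = Real.sqrt 1 by simp]
    exact Real.sqrt_le_sqrt (by rw [h1]; exact hu)
  · intro w
    rw [euc_inner, ← Finset.sum_coe_sort ξ.support (fun x => u x * gfun ξ w x)]
    refine Finset.sum_congr rfl fun x _ => ?_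
    have hx : Real.sqrt (ξ (x : X)) ≠ 0 := sqrt_ne_zero_of_mem x.2
    show u (x : X) * gfun ξ w (x : X)
        = (Real.sqrt (ξ (x : X)) * u (x : X)) * ((Real.sqrt (ξ (x : X)))⁻¹ * gfun ξ w (x : X))
    field_simp

lemma exists_u (ξ : X →₀ ℕ) (v : EuclideanSpace ℝ ↥ξ.support) (hv : ‖v‖ ≤ 1) :
    ∃ u : X → ℝ, (∑ x ∈ ξ.support, (ξ x : ℝ) * u x ^ 2) ≤ 1 ∧
      ∀ w : (X →₀ ℕ) →₀ ℝ,
        (∑ x ∈ ξ.support, u x * gfun ξ w x) = ⟪v, phi ξ w⟫ := by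
  classical
  have hvsq : ∑ x : ↥ξ.support, v x ^ 2 ≤ 1 := by
    have h2 : ∑ x : ↥ξ.support, v x ^ 2 = ‖v‖ ^ 2 := by
      rw [EuclideanSpace.norm_eq, Real.sq_sqrt (by positivity)]
      exact Finset.sum_congr rfl fun x _ => by rw [Real.norm_eq_abs, sq_abs]
    rw [h2]
    nlinarith [norm_nonneg v]
  refine ⟨fun x => if h : x ∈ ξ.support then (Real.sqrt (ξ x))⁻¹ * v ⟨x, h⟩ else 0, ?_, ?_⟩
  · calc ∑ x ∈ ξ.support, (ξ x : ℝ) *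
          (if h : x ∈ ξ.support then (Real.sqrt (ξ x))⁻¹ * v ⟨x, h⟩ else 0) ^ 2
        = ∑ x : ↥ξ.support, (ξ (x : X) : ℝ) *
          (if h : (x : X) ∈ ξ.support then (Real.sqrt (ξ (x:X)))⁻¹ * v ⟨(x:X), h⟩ else 0) ^ 2 :=
          (Finset.sum_coe_sort ξ.support
            (fun y => (ξ y : ℝ) *
              (if h : y ∈ ξ.support then (Real.sqrt (ξ y))⁻¹ * v ⟨y, h⟩ else 0) ^ 2)).symm
      _ = ∑ x : ↥ξ.support, v x ^ 2 := by
          refine Finset.sum_congr rfl fun x _ => ?_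
          rw [dif_pos x.2]
          have hx : Real.sqrt (ξ (x : X)) ≠ 0 := sqrt_ne_zero_of_mem x.2
          have hsq : Real.sqrt (ξ (x : X)) ^ 2 = (ξ (x : X) : ℝ) := Real.sq_sqrt (by positivity)
          have : (⟨(x : X), x.2⟩ : ↥ξ.support) = x := Subtype.coe_eta x x.2
          have hξ : (ξ (x : X) : ℝ) ≠ 0 := by
            have := one_le_cast_of_mem x.2; linarith
          rw [this, mul_pow, inv_pow, hsq]
          exact mul_inv_cancel_left₀ hξ _
      _ ≤ 1 := hvsq
  · intro w
    rw [euc_inner]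
    rw [show (∑ x ∈ ξ.support,
        (if h : x ∈ ξ.support then (Real.sqrt (ξ x))⁻¹ * v ⟨x, h⟩ else 0) * gfun ξ w x)
        = ∑ x : ↥ξ.support,
        (if h : (x:X) ∈ ξ.support then (Real.sqrt (ξ (x:X)))⁻¹ * v ⟨(x:X), h⟩ else 0)
          * gfun ξ w (x:X) from
      (Finset.sum_coe_sort ξ.support (fun y =>
        (if h : y ∈ ξ.support then (Real.sqrt (ξ y))⁻¹ * v ⟨y, h⟩ else 0) * gfun ξ w y)).symm]
    refine Finset.sum_congr rfl fun x _ => ?_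
    rw [dif_pos x.2]
    have : (⟨(x : X), x.2⟩ : ↥ξ.support) = x := Subtype.coe_eta x x.2
    rw [this]
    show (Real.sqrt (ξ (x:X)))⁻¹ * v x * gfun ξ w (x : X)
        = v x * ((Real.sqrt (ξ (x : X)))⁻¹ * gfun ξ w (x : X))
    ring




-- sum over any superset of the support
lemma sum_mul_subset {α : Type*} (w : α →₀ ℝ) (f : α → ℝ) {s : Finset α}
    (h : w.support ⊆ s) :
    ∑ ν ∈ w.support, w ν * f ν = ∑ ν ∈ s, w ν * f ν :=
  Finset.sum_subset h (fun ν _ hν => by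
    rw [Finsupp.notMem_support_iff.mp hν, zero_mul])

lemma sum_subset' {α : Type*} (w : α →₀ ℝ) {s : Finset α} (h : w.support ⊆ s) :
    ∑ ν ∈ w.support, w ν = ∑ ν ∈ s, w ν :=
  Finset.sum_subset h (fun ν _ hν => Finsupp.notMem_support_iff.mp hν)

lemma isProbWeight_single {A : Set (X →₀ ℕ)} {ν : X →₀ ℕ} (hν : ν ∈ A) :
    IsProbWeight A (Finsupp.single ν (1:ℝ)) := by
  have hs : (Finsupp.single ν (1:ℝ)).support = {ν} :=
    Finsupp.support_single_ne_zero ν one_ne_zero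
  refine ⟨fun ν' => ?_, fun ν' => ?_, ?_, ?_⟩
  · rw [Finsupp.single_apply]; split <;> norm_num
  · rw [Finsupp.single_apply]; split <;> norm_num
  · rw [hs]; simp [hν]
  · rw [hs]; simp

lemma gfun_single (ξ : X →₀ ℕ) (ν : X →₀ ℕ) (x : X) :
    gfun ξ (Finsupp.single ν (1:ℝ)) x = max ((ξ x : ℝ) - (ν x : ℝ)) 0 := by
  rw [gfun, Finsupp.support_single_ne_zero ν one_ne_zero, Finset.sum_singleton,
    Finsupp.single_eq_same, one_mul]

lemma combo_apply (w₁ w₂ : (X →₀ ℕ) →₀ ℝ) (a b : ℝ) (ν : X →₀ ℕ) :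
    (a • w₁ + b • w₂) ν = a * w₁ ν + b * w₂ ν := by
  simp [Finsupp.add_apply, Finsupp.smul_apply, smul_eq_mul]

lemma combo_support (w₁ w₂ : (X →₀ ℕ) →₀ ℝ) (a b : ℝ) :
    (a • w₁ + b • w₂).support ⊆ w₁.support ∪ w₂.support := by
  classical
  refine Finsupp.support_add.trans ?_
  exact Finset.union_subset_union (Finsupp.support_smul) (Finsupp.support_smul)

lemma isProbWeight_combo {A : Set (X →₀ ℕ)} {w₁ w₂ : (X →₀ ℕ) →₀ ℝ}
    (h₁ : IsProbWeight A w₁) (h₂ : IsProbWeight A w₂) {a b : ℝ}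
    (ha : 0 ≤ a) (hb : 0 ≤ b) (hab : a + b = 1) :
    IsProbWeight A (a • w₁ + b • w₂) := by
  classical
  refine ⟨fun ν => ?_, fun ν => ?_, ?_, ?_⟩
  · rw [combo_apply]
    exact add_nonneg (mul_nonneg ha (h₁.1 ν)) (mul_nonneg hb (h₂.1 ν))
  · rw [combo_apply]
    nlinarith [h₁.2.1 ν, h₂.2.1 ν, h₁.1 ν, h₂.1 ν]
  · refine subset_trans ?_ (Set.union_subset h₁.2.2.1 h₂.2.2.1)
    rw [← Finset.coe_union]
    exact_mod_cast combo_support w₁ w₂ a b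
  · rw [sum_subset' _ (combo_support w₁ w₂ a b)]
    have e : ∀ ν ∈ w₁.support ∪ w₂.support,
        (a • w₁ + b • w₂) ν = a * w₁ ν + b * w₂ ν := fun ν _ => combo_apply _ _ _ _ _
    rw [Finset.sum_congr rfl e, Finset.sum_add_distrib, ← Finset.mul_sum, ← Finset.mul_sum,
      ← sum_subset' w₁ Finset.subset_union_left, ← sum_subset' w₂ Finset.subset_union_right,
      h₁.2.2.2, h₂.2.2.2, mul_one, mul_one, hab]

lemma gfun_combo (ξ : X →₀ ℕ) (w₁ w₂ : (X →₀ ℕ) →₀ ℝ) (a b : ℝ) (x : X) :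
    gfun ξ (a • w₁ + b • w₂) x = a * gfun ξ w₁ x + b * gfun ξ w₂ x := by
  classical
  rw [gfun, gfun, gfun,
    sum_mul_subset (a • w₁ + b • w₂) _ (combo_support w₁ w₂ a b),
    sum_mul_subset w₁ _ (Finset.subset_union_left : w₁.support ⊆ w₁.support ∪ w₂.support),
    sum_mul_subset w₂ _ (Finset.subset_union_right : w₂.support ⊆ w₁.support ∪ w₂.support),
    Finset.mul_sum, Finset.mul_sum, ← Finset.sum_add_distrib]
  refine Finset.sum_congr rfl fun ν _ => ?_
  rw [combo_apply]; ring

lemma gfun_nonneg {A : Set (X →₀ ℕ)} (ξ : X →₀ ℕ) {w : (X →₀ ℕ) →₀ ℝ}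
    (hw : IsProbWeight A w) (x : X) : 0 ≤ gfun ξ w x :=
  Finset.sum_nonneg fun ν _ => mul_nonneg (hw.1 ν) (le_max_right _ _)

lemma gfun_le {A : Set (X →₀ ℕ)} (ξ : X →₀ ℕ) {w : (X →₀ ℕ) →₀ ℝ}
    (hw : IsProbWeight A w) (x : X) : gfun ξ w x ≤ (ξ x : ℝ) := by
  have h : ∀ ν ∈ w.support, w ν * max ((ξ x : ℝ) - (ν x : ℝ)) 0 ≤ w ν * (ξ x : ℝ) := by
    intro ν _
    refine mul_le_mul_of_nonneg_left ?_ (hw.1 ν)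
    refine max_le (by simp [sub_le_self_iff]) (by positivity)
  calc gfun ξ w x ≤ ∑ ν ∈ w.support, w ν * (ξ x : ℝ) := Finset.sum_le_sum h
    _ = (ξ x : ℝ) := by rw [← Finset.sum_mul, hw.2.2.2, one_mul]

-- uniform lower bound for ∑ u x * F x when 0 ≤ F ≤ ξ
lemma sum_lower (ξ : X →₀ ℕ) (u : X → ℝ) (F : X → ℝ)
    (h0 : ∀ x ∈ ξ.support, 0 ≤ F x) (h1 : ∀ x ∈ ξ.support, F x ≤ (ξ x : ℝ)) :
    -(∑ x ∈ ξ.support, |u x| * (ξ x : ℝ)) ≤ ∑ x ∈ ξ.support, u x * F x := by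
  rw [← Finset.sum_neg_distrib]
  refine Finset.sum_le_sum fun x hx => ?_
  have h2 : -|u x| * F x ≤ u x * F x :=
    mul_le_mul_of_nonneg_right (neg_abs_le _) (h0 x hx)
  have h3 : -|u x| * (ξ x : ℝ) ≤ -|u x| * F x :=
    mul_le_mul_of_nonpos_left (h1 x hx) (neg_nonpos.mpr (abs_nonneg _))
  have : -(|u x| * (ξ x : ℝ)) = -|u x| * (ξ x : ℝ) := by ring
  linarith


lemma phi_combo (ξ : X →₀ ℕ) (w₁ w₂ : (X →₀ ℕ) →₀ ℝ) (a b : ℝ) :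
    phi ξ (a • w₁ + b • w₂) = a • phi ξ w₁ + b • phi ξ w₂ := by
  refine PiLp.ext fun x => ?_
  have h : (a • phi ξ w₁ + b • phi ξ w₂) x = a * phi ξ w₁ x + b * phi ξ w₂ x := rfl
  rw [h]
  simp only [phi, gfun_combo]
  ring

lemma norm_phi_le {A : Set (X →₀ ℕ)} (ξ : X →₀ ℕ) {w : (X →₀ ℕ) →₀ ℝ}
    (hw : IsProbWeight A w) :
    ‖phi ξ w‖ ≤ ∑ x ∈ ξ.support, (ξ x : ℝ) := by
  rw [EuclideanSpace.norm_eq]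
  have hb : ∀ x : ↥ξ.support, ‖phi ξ w x‖ ^ 2 ≤ (ξ (x : X) : ℝ) ^ 2 := by
    intro x
    rw [Real.norm_eq_abs, sq_abs]
    have h0 : 0 ≤ phi ξ w x :=
      mul_nonneg (inv_nonneg.mpr (Real.sqrt_nonneg _)) (gfun_nonneg ξ hw _)
    have h1' : (Real.sqrt (ξ (x : X)))⁻¹ ≤ 1 := inv_le_one_of_one_le₀ (sqrt_one_le x.2)
    have h2 : phi ξ w x ≤ (ξ (x : X) : ℝ) := by
      have hle := gfun_le ξ hw (x : X)
      have hg0 := gfun_nonneg ξ hw (x : X)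
      calc phi ξ w x = (Real.sqrt (ξ (x : X)))⁻¹ * gfun ξ w (x : X) := rfl
        _ ≤ 1 * gfun ξ w (x : X) := mul_le_mul_of_nonneg_right h1' hg0
        _ = gfun ξ w (x : X) := one_mul _
        _ ≤ (ξ (x : X) : ℝ) := hle
    nlinarith
  calc Real.sqrt (∑ x : ↥ξ.support, ‖phi ξ w x‖ ^ 2)
      ≤ Real.sqrt (∑ x : ↥ξ.support, (ξ (x : X) : ℝ) ^ 2) :=
        Real.sqrt_le_sqrt (Finset.sum_le_sum fun x _ => hb x)
    _ ≤ Real.sqrt ((∑ x : ↥ξ.support, (ξ (x : X) : ℝ)) ^ 2) :=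
        Real.sqrt_le_sqrt (Finset.sum_sq_le_sq_sum_of_nonneg (fun x _ => by positivity))
    _ = ∑ x : ↥ξ.support, (ξ (x : X) : ℝ) := Real.sqrt_sq (by positivity)
    _ = ∑ x ∈ ξ.support, (ξ x : ℝ) := Finset.sum_coe_sort ξ.support (fun x => (ξ x : ℝ))

lemma inf_eq (ξ : X →₀ ℕ) (A : Set (X →₀ ℕ)) (hA : A.Nonempty) (u : X → ℝ) :
    sInf {s : ℝ | ∃ ν ∈ A, s = ∑ x ∈ ξ.support, u x * max ((ξ x : ℝ) - (ν x : ℝ)) 0}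
      = sInf {s : ℝ | ∃ w : (X →₀ ℕ) →₀ ℝ, IsProbWeight A w ∧
          s = ∑ x ∈ ξ.support, u x * gfun ξ w x} := by
  obtain ⟨ν₀, hν₀⟩ := hA
  set S1 := {s : ℝ | ∃ ν ∈ A, s = ∑ x ∈ ξ.support, u x * max ((ξ x : ℝ) - (ν x : ℝ)) 0}
    with hS1
  set S2 := {s : ℝ | ∃ w : (X →₀ ℕ) →₀ ℝ, IsProbWeight A w ∧
      s = ∑ x ∈ ξ.support, u x * gfun ξ w x} with hS2
  have hS1bdd : BddBelow S1 := by
    refine ⟨-(∑ x ∈ ξ.support, |u x| * (ξ x : ℝ)), ?_⟩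
    rintro s ⟨ν, hν, rfl⟩
    exact sum_lower ξ u _ (fun x _ => le_max_right _ _)
      (fun x _ => max_le (by simp [sub_le_self_iff]) (by positivity))
  have hS2bdd : BddBelow S2 := by
    refine ⟨-(∑ x ∈ ξ.support, |u x| * (ξ x : ℝ)), ?_⟩
    rintro s ⟨w, hw, rfl⟩
    exact sum_lower ξ u _ (fun x _ => gfun_nonneg ξ hw x) (fun x _ => gfun_le ξ hw x)
  have hS1ne : S1.Nonempty := ⟨_, ν₀, hν₀, rfl⟩
  have hS2ne : S2.Nonempty := ⟨_, _, isProbWeight_single hν₀, rfl⟩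
  refine le_antisymm (le_csInf hS2ne ?_) (le_csInf hS1ne ?_)
  · rintro s ⟨w, hw, rfl⟩
    have swap : ∑ x ∈ ξ.support, u x * gfun ξ w x
        = ∑ ν ∈ w.support, w ν *
            ∑ x ∈ ξ.support, u x * max ((ξ x : ℝ) - (ν x : ℝ)) 0 := by
      calc ∑ x ∈ ξ.support, u x * gfun ξ w x
          = ∑ x ∈ ξ.support, ∑ ν ∈ w.support,
              w ν * (u x * max ((ξ x : ℝ) - (ν x : ℝ)) 0) := by
            refine Finset.sum_congr rfl fun x _ => ?_
            rw [gfun, Finset.mul_sum]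
            exact Finset.sum_congr rfl fun ν _ => by ring
        _ = ∑ ν ∈ w.support, ∑ x ∈ ξ.support,
              w ν * (u x * max ((ξ x : ℝ) - (ν x : ℝ)) 0) := Finset.sum_comm
        _ = ∑ ν ∈ w.support, w ν *
              ∑ x ∈ ξ.support, u x * max ((ξ x : ℝ) - (ν x : ℝ)) 0 := by
            exact Finset.sum_congr rfl fun ν _ => (Finset.mul_sum _ _ _).symm
    rw [swap]
    have hm : ∀ ν ∈ w.support,
        sInf S1 ≤ ∑ x ∈ ξ.support, u x * max ((ξ x : ℝ) - (ν x : ℝ)) 0 := fun ν hν =>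
      csInf_le hS1bdd ⟨ν, hw.2.2.1 (Finset.mem_coe.mpr hν), rfl⟩
    calc sInf S1 = (∑ ν ∈ w.support, w ν) * sInf S1 := by rw [hw.2.2.2, one_mul]
      _ = ∑ ν ∈ w.support, w ν * sInf S1 := Finset.sum_mul _ _ _
      _ ≤ _ := Finset.sum_le_sum fun ν hν =>
          mul_le_mul_of_nonneg_left (hm ν hν) (hw.1 ν)
  · rintro s ⟨ν, hν, rfl⟩
    refine csInf_le hS2bdd ⟨Finsupp.single ν 1, isProbWeight_single hν, ?_⟩
    exact Finset.sum_congr rfl fun x _ => by rw [gfun_single]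

lemma aux2 (ξ : X →₀ ℕ) (A : Set (X →₀ ℕ)) (hA : A.Nonempty) :
    sSup {r : ℝ | ∃ u : X → ℝ, (∑ x ∈ ξ.support, (ξ x : ℝ) * u x ^ 2) ≤ 1 ∧
      r = sInf {s : ℝ | ∃ w : (X →₀ ℕ) →₀ ℝ, IsProbWeight A w ∧
        s = ∑ x ∈ ξ.support, u x * gfun ξ w x}}
    = sInf {r : ℝ | ∃ w : (X →₀ ℕ) →₀ ℝ, IsProbWeight A w ∧
      r = sSup {s : ℝ | ∃ u : X → ℝ, (∑ x ∈ ξ.support, (ξ x : ℝ) * u x ^ 2) ≤ 1 ∧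
        s = ∑ x ∈ ξ.support, u x * gfun ξ w x}} := by
  obtain ⟨ν₀, hν₀⟩ := hA
  set Cset := phi ξ '' {w | IsProbWeight A w} with hCset
  have hconv : Convex ℝ Cset := by
    rintro c₁ ⟨w₁, h₁, rfl⟩ c₂ ⟨w₂, h₂, rfl⟩ a b ha hb hab
    exact ⟨a • w₁ + b • w₂, isProbWeight_combo h₁ h₂ ha hb hab, (phi_combo ξ w₁ w₂ a b)⟩
  have hne : Cset.Nonempty :=
    ⟨phi ξ (Finsupp.single ν₀ 1), _, isProbWeight_single hν₀, rfl⟩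
  have hM : ∀ c ∈ Cset, ‖c‖ ≤ ∑ x ∈ ξ.support, (ξ x : ℝ) := by
    rintro c ⟨w, hw, rfl⟩; exact norm_phi_le ξ hw
  have hsetuv : ∀ w : (X →₀ ℕ) →₀ ℝ,
      {s : ℝ | ∃ u : X → ℝ, (∑ x ∈ ξ.support, (ξ x : ℝ) * u x ^ 2) ≤ 1 ∧
        s = ∑ x ∈ ξ.support, u x * gfun ξ w x}
      = {s : ℝ | ∃ v : EuclideanSpace ℝ ↥ξ.support, ‖v‖ ≤ 1 ∧ s = ⟪v, phi ξ w⟫} := by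
    intro w; ext s
    constructor
    · rintro ⟨u, hu, rfl⟩
      obtain ⟨v, hv, hvw⟩ := exists_v ξ u hu
      exact ⟨v, hv, hvw w⟩
    · rintro ⟨v, hv, rfl⟩
      obtain ⟨u, hu, huw⟩ := exists_u ξ v hv
      exact ⟨u, hu, (huw w).symm⟩
  have hsets : ∀ (u : X → ℝ) (v : EuclideanSpace ℝ ↥ξ.support),
      (∀ w, (∑ x ∈ ξ.support, u x * gfun ξ w x) = ⟪v, phi ξ w⟫) →
      {s : ℝ | ∃ w : (X →₀ ℕ) →₀ ℝ, IsProbWeight A w ∧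
        s = ∑ x ∈ ξ.support, u x * gfun ξ w x}
      = {s : ℝ | ∃ c ∈ Cset, s = ⟪v, c⟫} := by
    intro u v h; ext s; constructor
    · rintro ⟨w, hw, rfl⟩; exact ⟨phi ξ w, ⟨w, hw, rfl⟩, h w⟩
    · rintro ⟨c, ⟨w, hw, rfl⟩, rfl⟩; exact ⟨w, hw, (h w).symm⟩
  have hL : {r : ℝ | ∃ u : X → ℝ, (∑ x ∈ ξ.support, (ξ x : ℝ) * u x ^ 2) ≤ 1 ∧
      r = sInf {s : ℝ | ∃ w : (X →₀ ℕ) →₀ ℝ, IsProbWeight A w ∧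
        s = ∑ x ∈ ξ.support, u x * gfun ξ w x}}
      = {r : ℝ | ∃ v : EuclideanSpace ℝ ↥ξ.support, ‖v‖ ≤ 1 ∧
        r = sInf {s : ℝ | ∃ c ∈ Cset, s = ⟪v, c⟫}} := by
    ext r; constructor
    · rintro ⟨u, hu, rfl⟩
      obtain ⟨v, hv, hvw⟩ := exists_v ξ u hu
      exact ⟨v, hv, congrArg sInf (hsets u v hvw)⟩
    · rintro ⟨v, hv, rfl⟩
      obtain ⟨u, hu, huw⟩ := exists_u ξ v hv
      exact ⟨u, hu, (congrArg sInf (hsets u v huw)).symm⟩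
  have hR : {r : ℝ | ∃ w : (X →₀ ℕ) →₀ ℝ, IsProbWeight A w ∧
      r = sSup {s : ℝ | ∃ u : X → ℝ, (∑ x ∈ ξ.support, (ξ x : ℝ) * u x ^ 2) ≤ 1 ∧
        s = ∑ x ∈ ξ.support, u x * gfun ξ w x}}
      = {r : ℝ | ∃ c ∈ Cset, r = ‖c‖} := by
    ext r; constructor
    · rintro ⟨w, hw, rfl⟩
      exact ⟨phi ξ w, ⟨w, hw, rfl⟩, by rw [hsetuv w, sSup_inner_unit_ball]⟩
    · rintro ⟨c, ⟨w, hw, rfl⟩, rfl⟩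
      exact ⟨w, hw, by rw [hsetuv w, sSup_inner_unit_ball]⟩
  rw [hL, hR]
  exact minimax_ball Cset hconv hne _ hM


end Translate
end CDMinimaxAux

open CDMinimaxAux in
/-- Proposition 8.1: minimax characterization of the convex distance, where `w`
ranges over finitely supported probability weights on `A`. -/
theorem convexDist_minimax {X : Type*} (ξ : X →₀ ℕ) (A : Set (X →₀ ℕ))
    (hA : A.Nonempty) :
    convexDist ξ A =
      sSup {r : ℝ | ∃ u : X → ℝ,
        (∑ x ∈ ξ.support, (ξ x : ℝ) * u x ^ 2) ≤ 1 ∧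
        r = sInf {s : ℝ | ∃ w : (X →₀ ℕ) →₀ ℝ, IsProbWeight A w ∧
          s = ∑ x ∈ ξ.support,
            u x * ∑ ν ∈ w.support, w ν * max ((ξ x : ℝ) - (ν x : ℝ)) 0}} ∧
    convexDist ξ A =
      sInf {r : ℝ | ∃ w : (X →₀ ℕ) →₀ ℝ, IsProbWeight A w ∧
        r = sSup {s : ℝ | ∃ u : X → ℝ,
          (∑ x ∈ ξ.support, (ξ x : ℝ) * u x ^ 2) ≤ 1 ∧
          s = ∑ x ∈ ξ.support,
            u x * ∑ ν ∈ w.support, w ν * max ((ξ x : ℝ) - (ν x : ℝ)) 0}} := by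
  have h1 : convexDist ξ A =
      sSup {r : ℝ | ∃ u : X → ℝ,
        (∑ x ∈ ξ.support, (ξ x : ℝ) * u x ^ 2) ≤ 1 ∧
        r = sInf {s : ℝ | ∃ w : (X →₀ ℕ) →₀ ℝ, IsProbWeight A w ∧
          s = ∑ x ∈ ξ.support,
            u x * ∑ ν ∈ w.support, w ν * max ((ξ x : ℝ) - (ν x : ℝ)) 0}} := by
    rw [convexDist]
    congr 1
    ext r
    constructor
    · rintro ⟨u, hu, rfl⟩; exact ⟨u, hu, inf_eq ξ A hA u⟩
    · rintro ⟨u, hu, rfl⟩; exact ⟨u, hu, (inf_eq ξ A hA u).symm⟩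
  refine ⟨h1, ?_⟩
  rw [h1]
  exact aux2 ξ A hA
end

section
/- Let X be a set, ξ : X → ℕ finitely supported, and A a nonempty set of finitely supported functions X → ℕ. Then Σ_{z ∈ supp ξ} ξ(z)·(d_T(ξ, A) − d_T(ξ − δ_z, A))² ≤ 1. -/
namespace ConvexDistAux

open scoped Classical

variable {X : Type*}

/-- The inner set of values over `ν ∈ A`. -/
def ivSet (ξ : X →₀ ℕ) (A : Set (X →₀ ℕ)) (u : X → ℝ) : Set ℝ :=
  {s : ℝ | ∃ ν ∈ A, s = ∑ x ∈ ξ.support, u x * max ((ξ x : ℝ) - (ν x : ℝ)) 0}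

/-- The inner infimum. -/
noncomputable def iv (ξ : X →₀ ℕ) (A : Set (X →₀ ℕ)) (u : X → ℝ) : ℝ :=
  sInf (ivSet ξ A u)

/-- admissibility of a weight function. -/
def adm (ξ : X →₀ ℕ) (u : X → ℝ) : Prop :=
  (∑ x ∈ ξ.support, (ξ x : ℝ) * u x ^ 2) ≤ 1

/-- The outer set. -/
def cSet (ξ : X →₀ ℕ) (A : Set (X →₀ ℕ)) : Set ℝ :=
  {r : ℝ | ∃ u : X → ℝ, adm ξ u ∧ r = iv ξ A u}

lemma ivSet_nonempty {A : Set (X →₀ ℕ)} (hA : A.Nonempty) (ξ : X →₀ ℕ) (u : X → ℝ) :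
    (ivSet ξ A u).Nonempty := by
  obtain ⟨ν, hν⟩ := hA
  exact ⟨_, ν, hν, rfl⟩

lemma ivSet_bddBelow (ξ : X →₀ ℕ) (A : Set (X →₀ ℕ)) (u : X → ℝ) :
    BddBelow (ivSet ξ A u) := by
  refine ⟨∑ x ∈ ξ.support, -(|u x| * (ξ x : ℝ)), ?_⟩
  rintro s ⟨ν, hν, rfl⟩
  refine Finset.sum_le_sum fun x _ => ?_
  have h1 : 0 ≤ max ((ξ x : ℝ) - (ν x : ℝ)) 0 := le_max_right _ _
  have h2 : max ((ξ x : ℝ) - (ν x : ℝ)) 0 ≤ (ξ x : ℝ) := by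
    apply max_le _ (Nat.cast_nonneg _)
    have : (0:ℝ) ≤ (ν x : ℝ) := Nat.cast_nonneg _
    linarith
  nlinarith [neg_abs_le (u x), abs_nonneg (u x)]

lemma iv_le {A : Set (X →₀ ℕ)} {ν : X →₀ ℕ} (hν : ν ∈ A) (ξ : X →₀ ℕ) (u : X → ℝ) :
    iv ξ A u ≤ ∑ x ∈ ξ.support, u x * max ((ξ x : ℝ) - (ν x : ℝ)) 0 :=
  csInf_le (ivSet_bddBelow ξ A u) ⟨ν, hν, rfl⟩

lemma sum_abs_le {ξ : X →₀ ℕ} {u : X → ℝ} (h : adm ξ u) :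
    ∑ x ∈ ξ.support, (ξ x : ℝ) * |u x| ≤ Real.sqrt (∑ x ∈ ξ.support, (ξ x : ℝ)) := by
  have hs : (0:ℝ) ≤ ∑ x ∈ ξ.support, (ξ x : ℝ) :=
    Finset.sum_nonneg fun x _ => Nat.cast_nonneg _
  have hr : (0:ℝ) ≤ ∑ x ∈ ξ.support, (ξ x : ℝ) * |u x| :=
    Finset.sum_nonneg fun x _ => mul_nonneg (Nat.cast_nonneg _) (abs_nonneg _)
  rw [Real.le_sqrt hr hs]
  have cs := Finset.sum_mul_sq_le_sq_mul_sq ξ.support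
    (fun x => Real.sqrt (ξ x : ℝ)) (fun x => Real.sqrt (ξ x : ℝ) * |u x|)
  have e1 : ∀ x ∈ ξ.support, Real.sqrt (ξ x : ℝ) * (Real.sqrt (ξ x : ℝ) * |u x|)
      = (ξ x : ℝ) * |u x| := by
    intro x _
    rw [← mul_assoc, Real.mul_self_sqrt (Nat.cast_nonneg _)]
  have e2 : ∀ x ∈ ξ.support, Real.sqrt (ξ x : ℝ) ^ 2 = (ξ x : ℝ) := by
    intro x _; exact Real.sq_sqrt (Nat.cast_nonneg _)
  have e3 : ∀ x ∈ ξ.support, (Real.sqrt (ξ x : ℝ) * |u x|) ^ 2 = (ξ x : ℝ) * u x ^ 2 := by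
    intro x _
    rw [mul_pow, Real.sq_sqrt (Nat.cast_nonneg _), sq_abs]
  rw [Finset.sum_congr rfl e1, Finset.sum_congr rfl e2, Finset.sum_congr rfl e3] at cs
  calc (∑ x ∈ ξ.support, (ξ x : ℝ) * |u x|) ^ 2
      ≤ (∑ x ∈ ξ.support, (ξ x : ℝ)) * ∑ x ∈ ξ.support, (ξ x : ℝ) * u x ^ 2 := cs
    _ ≤ (∑ x ∈ ξ.support, (ξ x : ℝ)) * 1 := by
        exact mul_le_mul_of_nonneg_left h hs
    _ = _ := mul_one _

lemma iv_le_sqrt {A : Set (X →₀ ℕ)} (hA : A.Nonempty) {ξ : X →₀ ℕ} {u : X → ℝ}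
    (h : adm ξ u) :
    iv ξ A u ≤ Real.sqrt (∑ x ∈ ξ.support, (ξ x : ℝ)) := by
  obtain ⟨ν, hν⟩ := hA
  refine le_trans (iv_le hν ξ u) (le_trans ?_ (sum_abs_le h))
  refine Finset.sum_le_sum fun x _ => ?_
  have h1 : 0 ≤ max ((ξ x : ℝ) - (ν x : ℝ)) 0 := le_max_right _ _
  have h2 : max ((ξ x : ℝ) - (ν x : ℝ)) 0 ≤ (ξ x : ℝ) := by
    apply max_le _ (Nat.cast_nonneg _)
    have : (0:ℝ) ≤ (ν x : ℝ) := Nat.cast_nonneg _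
    linarith
  nlinarith [le_abs_self (u x), abs_nonneg (u x)]

lemma cSet_bddAbove {A : Set (X →₀ ℕ)} (hA : A.Nonempty) (ξ : X →₀ ℕ) :
    BddAbove (cSet ξ A) := by
  refine ⟨Real.sqrt (∑ x ∈ ξ.support, (ξ x : ℝ)), ?_⟩
  rintro r ⟨u, hu, rfl⟩
  exact iv_le_sqrt hA hu

lemma zero_mem_cSet {A : Set (X →₀ ℕ)} (hA : A.Nonempty) (ξ : X →₀ ℕ) :
    (0:ℝ) ∈ cSet ξ A := by
  refine ⟨fun _ => 0, ?_, ?_⟩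
  · simp [adm]
  · have : ivSet ξ A (fun _ => 0) = {0} := by
      ext s
      constructor
      · rintro ⟨ν, hν, rfl⟩; simp
      · rintro rfl; obtain ⟨ν, hν⟩ := hA; exact ⟨ν, hν, by simp⟩
    rw [iv, this, csInf_singleton]

lemma cSet_nonempty {A : Set (X →₀ ℕ)} (hA : A.Nonempty) (ξ : X →₀ ℕ) :
    (cSet ξ A).Nonempty := ⟨0, zero_mem_cSet hA ξ⟩

lemma convexDist_eq (ξ : X →₀ ℕ) (A : Set (X →₀ ℕ)) :
    convexDist ξ A = sSup (cSet ξ A) := rfl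

lemma iv_le_convexDist {A : Set (X →₀ ℕ)} (hA : A.Nonempty) {ξ : X →₀ ℕ} {u : X → ℝ}
    (h : adm ξ u) : iv ξ A u ≤ convexDist ξ A := by
  rw [convexDist_eq]
  exact le_csSup (cSet_bddAbove hA ξ) ⟨u, h, rfl⟩

lemma convexDist_nonneg {A : Set (X →₀ ℕ)} (hA : A.Nonempty) (ξ : X →₀ ℕ) :
    0 ≤ convexDist ξ A := by
  rw [convexDist_eq]
  exact le_csSup (cSet_bddAbove hA ξ) (zero_mem_cSet hA ξ)

/-- Replacing `u` by its positive part only increases the inner infimum. -/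
lemma iv_le_iv_posPart {A : Set (X →₀ ℕ)} (hA : A.Nonempty) (ξ : X →₀ ℕ) (u : X → ℝ) :
    iv ξ A u ≤ iv ξ A (fun x => max (u x) 0) := by
  refine le_csInf (ivSet_nonempty hA ξ _) ?_
  rintro s ⟨ν, hν, rfl⟩
  refine le_trans (iv_le hν ξ u) (Finset.sum_le_sum fun x _ => ?_)
  have h1 : 0 ≤ max ((ξ x : ℝ) - (ν x : ℝ)) 0 := le_max_right _ _
  exact mul_le_mul_of_nonneg_right (le_max_left _ _) h1

lemma adm_posPart {ξ : X →₀ ℕ} {u : X → ℝ} (h : adm ξ u) :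
    adm ξ (fun x => max (u x) 0) := by
  refine le_trans (Finset.sum_le_sum fun x _ => ?_) h
  have : (max (u x) 0) ^ 2 ≤ u x ^ 2 := by
    rcases le_or_gt (u x) 0 with h' | h'
    · rw [max_eq_right h']; simpa using sq_nonneg (u x)
    · rw [max_eq_left h'.le]
  exact mul_le_mul_of_nonneg_left this (Nat.cast_nonneg _)

lemma exists_good {A : Set (X →₀ ℕ)} (hA : A.Nonempty) (ξ : X →₀ ℕ) {ε : ℝ} (hε : 0 < ε) :
    ∃ u : X → ℝ, (∀ x, 0 ≤ u x) ∧ adm ξ u ∧ convexDist ξ A - ε ≤ iv ξ A u := by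
  have h1 : convexDist ξ A - ε < sSup (cSet ξ A) := by
    rw [← convexDist_eq]; linarith
  obtain ⟨r, ⟨u, hu, rfl⟩, hr⟩ := exists_lt_of_lt_csSup (cSet_nonempty hA ξ) h1
  exact ⟨fun x => max (u x) 0, fun x => le_max_right _ _, adm_posPart hu,
    le_trans hr.le (iv_le_iv_posPart hA ξ u)⟩

section Remove

variable {z : X} {ξ : X →₀ ℕ}

lemma sub_apply_ne (ξ : X →₀ ℕ) (z x : X) (hx : x ≠ z) :
    (ξ - Finsupp.single z 1 : X →₀ ℕ) x = ξ x := by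
  rw [Finsupp.tsub_apply, Finsupp.single_apply, if_neg (Ne.symm hx), Nat.sub_zero]

lemma sub_apply_self (ξ : X →₀ ℕ) (z : X) :
    (ξ - Finsupp.single z 1 : X →₀ ℕ) z = ξ z - 1 := by
  rw [Finsupp.tsub_apply, Finsupp.single_apply, if_pos rfl]

lemma sub_apply_self_cast (hz : z ∈ ξ.support) :
    (((ξ - Finsupp.single z 1 : X →₀ ℕ) z : ℕ) : ℝ) = (ξ z : ℝ) - 1 := by
  rw [sub_apply_self]
  have h1 : 1 ≤ ξ z := Nat.one_le_iff_ne_zero.2 (Finsupp.mem_support_iff.1 hz)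
  rw [Nat.cast_sub h1, Nat.cast_one]

lemma sub_support_subset (ξ : X →₀ ℕ) (z : X) :
    (ξ - Finsupp.single z 1).support ⊆ ξ.support := by
  intro x hx
  rw [Finsupp.mem_support_iff] at hx ⊢
  intro h
  apply hx
  rw [Finsupp.tsub_apply, h, Nat.zero_sub]

/-- Extending sums of the reduced configuration from its support to that of `ξ`:
value sums. -/
lemma sum_val_ext (ν : X →₀ ℕ) (u : X → ℝ) :
    ∑ x ∈ (ξ - Finsupp.single z 1).support,
        u x * max ((((ξ - Finsupp.single z 1 : X →₀ ℕ) x : ℕ) : ℝ) - (ν x : ℝ)) 0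
      = ∑ x ∈ ξ.support,
        u x * max ((((ξ - Finsupp.single z 1 : X →₀ ℕ) x : ℕ) : ℝ) - (ν x : ℝ)) 0 := by
  refine Finset.sum_subset (sub_support_subset ξ z) fun x _ hx => ?_
  rw [Finsupp.notMem_support_iff] at hx
  rw [hx]
  have : max ((0:ℝ) - (ν x : ℝ)) 0 = 0 := by
    apply max_eq_right
    have : (0:ℝ) ≤ (ν x : ℝ) := Nat.cast_nonneg _
    linarith
  simp [this]

/-- Extending sums of the reduced configuration from its support to that of `ξ`:
norm sums. -/
lemma sum_norm_ext (u : X → ℝ) :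
    ∑ x ∈ (ξ - Finsupp.single z 1).support,
        (((ξ - Finsupp.single z 1 : X →₀ ℕ) x : ℕ) : ℝ) * u x ^ 2
      = ∑ x ∈ ξ.support, (((ξ - Finsupp.single z 1 : X →₀ ℕ) x : ℕ) : ℝ) * u x ^ 2 := by
  refine Finset.sum_subset (sub_support_subset ξ z) fun x _ hx => ?_
  rw [Finsupp.notMem_support_iff] at hx
  rw [hx]
  simp

/-- Key elementary inequality used for monotonicity. -/
lemma step_ineq {m k : ℝ} (hm : 1 ≤ m) (hk : 0 ≤ k) :
    max (m - 1 - k) 0 ≤ Real.sqrt ((m - 1) / m) * max (m - k) 0 := by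
  have hm0 : 0 < m := lt_of_lt_of_le one_pos hm
  have hq : 0 ≤ (m - 1) / m := div_nonneg (by linarith) hm0.le
  rcases le_or_gt (m - 1 - k) 0 with h | h
  · rw [max_eq_right h]
    exact mul_nonneg (Real.sqrt_nonneg _) (le_max_right _ _)
  · rw [max_eq_left h.le, max_eq_left (by linarith : (0:ℝ) ≤ m - k)]
    have hmk : 0 ≤ m - k := by linarith
    rw [show Real.sqrt ((m - 1) / m) * (m - k) = Real.sqrt ((m - 1) / m * (m - k) ^ 2) by
      rw [Real.sqrt_mul hq, Real.sqrt_sq hmk]]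
    rw [show m - 1 - k = Real.sqrt ((m - 1 - k) ^ 2) by rw [Real.sqrt_sq h.le]]
    apply Real.sqrt_le_sqrt
    rw [div_mul_eq_mul_div, le_div_iff₀ hm0]
    nlinarith [mul_nonneg (by linarith : (0:ℝ) ≤ m - 1 - k) hk, hk, h]

/-- Monotonicity: removing a point decreases the convex distance. -/
lemma convexDist_sub_le {A : Set (X →₀ ℕ)} (hA : A.Nonempty) (hz : z ∈ ξ.support) :
    convexDist (ξ - Finsupp.single z 1) A ≤ convexDist ξ A := by
  rw [convexDist_eq (ξ - Finsupp.single z 1) A]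
  refine csSup_le (cSet_nonempty hA _) ?_
  rintro r ⟨v, hv, rfl⟩
  set w : X → ℝ := fun x => max (v x) 0 with hw
  have hw0 : ∀ x, 0 ≤ w x := fun x => le_max_right _ _
  have hwadm : adm (ξ - Finsupp.single z 1) w := adm_posPart hv
  refine le_trans (iv_le_iv_posPart hA _ v) ?_
  have hm1 : (1:ℝ) ≤ (ξ z : ℝ) := by
    have h1 : 1 ≤ ξ z := Nat.one_le_iff_ne_zero.2 (Finsupp.mem_support_iff.1 hz)
    exact_mod_cast h1
  have hm0 : (0:ℝ) < (ξ z : ℝ) := lt_of_lt_of_le one_pos hm1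
  set c : ℝ := Real.sqrt (((ξ z : ℝ) - 1) / (ξ z : ℝ)) with hc
  set u : X → ℝ := fun x => if x = z then w z * c else w x with hu
  have hcsq : c ^ 2 = ((ξ z : ℝ) - 1) / (ξ z : ℝ) :=
    Real.sq_sqrt (div_nonneg (by linarith) hm0.le)
  have huz : u z = w z * c := by simp [hu]
  have hune : ∀ x, x ≠ z → u x = w x := by intro x hx; simp [hu, hx]
  have hc0 : 0 ≤ c := Real.sqrt_nonneg _
  have hξz : (ξ z : ℝ) ≠ 0 := ne_of_gt hm0
  -- admissibility of u for ξ
  have huadm : adm ξ u := by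
    unfold adm
    have key : ∀ x ∈ ξ.support, (ξ x : ℝ) * u x ^ 2
        = (((ξ - Finsupp.single z 1 : X →₀ ℕ) x : ℕ) : ℝ) * w x ^ 2 := by
      intro x _
      by_cases hx : x = z
      · rw [hx, huz, sub_apply_self_cast hz, mul_pow, hcsq]
        field_simp
      · rw [hune x hx, sub_apply_ne ξ z x hx]
    rw [Finset.sum_congr rfl key, ← sum_norm_ext]
    exact hwadm
  -- value comparison
  have hval : iv (ξ - Finsupp.single z 1) A w ≤ iv ξ A u := by
    refine le_csInf (ivSet_nonempty hA ξ u) ?_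
    rintro s ⟨ν, hν, rfl⟩
    refine le_trans (iv_le hν _ w) ?_
    rw [sum_val_ext]
    refine Finset.sum_le_sum fun x hx => ?_
    by_cases hxz : x = z
    · rw [hxz, huz, sub_apply_self_cast hz]
      have hstep := step_ineq hm1 (Nat.cast_nonneg (ν z) : (0:ℝ) ≤ (ν z : ℝ))
      have : w z * max ((ξ z : ℝ) - 1 - (ν z : ℝ)) 0
          ≤ w z * (c * max ((ξ z : ℝ) - (ν z : ℝ)) 0) := by
        exact mul_le_mul_of_nonneg_left hstep (hw0 z)
      calc w z * max ((ξ z : ℝ) - 1 - (ν z : ℝ)) 0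
          ≤ w z * (c * max ((ξ z : ℝ) - (ν z : ℝ)) 0) := this
        _ = w z * c * max ((ξ z : ℝ) - (ν z : ℝ)) 0 := by ring
    · rw [hune x hxz, sub_apply_ne ξ z x hxz]
  exact le_trans hval (iv_le_convexDist hA huadm)

/-- max(a-k,0) ≤ max(a-1-k,0) + 1 -/
lemma max_sub_one_le (a k : ℝ) : max (a - k) 0 ≤ max (a - 1 - k) 0 + 1 := by
  apply max_le
  · have : a - 1 - k ≤ max (a - 1 - k) 0 := le_max_left _ _
    linarith
  · have : (0:ℝ) ≤ max (a - 1 - k) 0 := le_max_right _ _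
    linarith

/-- Upper bound on the remove-one difference for a nonnegative near-optimal `u`. -/
lemma diff_le {A : Set (X →₀ ℕ)} (hA : A.Nonempty) (hz : z ∈ ξ.support)
    {u : X → ℝ} (hu0 : ∀ x, 0 ≤ u x) (hu : adm ξ u) :
    iv ξ A u - u z ≤ convexDist (ξ - Finsupp.single z 1) A := by
  -- u is admissible for ξ - δ_z
  have huadm : adm (ξ - Finsupp.single z 1) u := by
    unfold adm
    rw [sum_norm_ext]
    refine le_trans (Finset.sum_le_sum fun x _ => ?_) hu
    have : (((ξ - Finsupp.single z 1 : X →₀ ℕ) x : ℕ) : ℝ) ≤ (ξ x : ℝ) := by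
      have h : (ξ - Finsupp.single z 1 : X →₀ ℕ) x ≤ ξ x := by
        rw [Finsupp.tsub_apply]; exact Nat.sub_le _ _
      exact_mod_cast h
    exact mul_le_mul_of_nonneg_right this (sq_nonneg _)
  refine le_trans ?_ (iv_le_convexDist hA huadm)
  refine le_csInf (ivSet_nonempty hA _ u) ?_
  rintro t ⟨ν, hν, rfl⟩
  rw [sub_le_iff_le_add, sum_val_ext]
  refine le_trans (iv_le hν ξ u) ?_
  have key : ∀ x ∈ ξ.support,
      u x * max ((ξ x : ℝ) - (ν x : ℝ)) 0
        ≤ u x * max ((((ξ - Finsupp.single z 1 : X →₀ ℕ) x : ℕ) : ℝ) - (ν x : ℝ)) 0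
            + (if x = z then u z else 0) := by
    intro x hx
    by_cases hxz : x = z
    · rw [hxz, if_pos rfl, sub_apply_self_cast hz]
      have h1 := max_sub_one_le (ξ z : ℝ) (ν z : ℝ)
      nlinarith [hu0 z]
    · rw [if_neg hxz, sub_apply_ne ξ z x hxz, add_zero]
  calc ∑ x ∈ ξ.support, u x * max ((ξ x : ℝ) - (ν x : ℝ)) 0
      ≤ ∑ x ∈ ξ.support,
          (u x * max ((((ξ - Finsupp.single z 1 : X →₀ ℕ) x : ℕ) : ℝ) - (ν x : ℝ)) 0
            + (if x = z then u z else 0)) :=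
        Finset.sum_le_sum key
    _ = (∑ x ∈ ξ.support,
          u x * max ((((ξ - Finsupp.single z 1 : X →₀ ℕ) x : ℕ) : ℝ) - (ν x : ℝ)) 0) + u z := by
        rw [Finset.sum_add_distrib, Finset.sum_ite_eq' ξ.support z (fun _ => u z), if_pos hz]

end Remove

end ConvexDistAux

/-- Proposition 8.3 (deterministic part): the remove-one-point differences of the
convex distance satisfy `Σ_{z ∈ supp ξ} ξ(z)·(d_T(ξ,A) − d_T(ξ − δ_z, A))² ≤ 1`. -/
theorem convexDist_remove_one_sq_sum_le_one {X : Type*} (ξ : X →₀ ℕ)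
    (A : Set (X →₀ ℕ)) (hA : A.Nonempty) :
    ∑ z ∈ ξ.support,
      (ξ z : ℝ) * (convexDist ξ A - convexDist (ξ - Finsupp.single z 1) A) ^ 2 ≤ 1 := by
  classical
  set S : ℝ := ∑ x ∈ ξ.support, (ξ x : ℝ) with hS
  have hS0 : 0 ≤ S := Finset.sum_nonneg fun x _ => Nat.cast_nonneg _
  have hsq : 0 ≤ Real.sqrt S := Real.sqrt_nonneg _
  refine le_of_forall_pos_le_add ?_
  intro δ hδ
  have hden : 0 < 2 * Real.sqrt S + S + 1 := by linarith
  set ε : ℝ := min 1 (δ / (2 * Real.sqrt S + S + 1)) with hε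
  have hε0 : 0 < ε := lt_min one_pos (div_pos hδ hden)
  obtain ⟨u, hu0, huadm, hugood⟩ := ConvexDistAux.exists_good hA ξ hε0
  have hpt : ∀ z ∈ ξ.support,
      (ξ z : ℝ) * (convexDist ξ A - convexDist (ξ - Finsupp.single z 1) A) ^ 2
        ≤ (ξ z : ℝ) * (u z + ε) ^ 2 := by
    intro z hz
    have h1 : convexDist (ξ - Finsupp.single z 1) A ≤ convexDist ξ A :=
      ConvexDistAux.convexDist_sub_le hA hz
    have h2 : convexDist ξ A - convexDist (ξ - Finsupp.single z 1) A ≤ u z + ε := by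
      have h3 := ConvexDistAux.diff_le hA hz hu0 huadm
      have h4 : ConvexDistAux.iv ξ A u ≤ convexDist ξ A :=
        ConvexDistAux.iv_le_convexDist hA huadm
      linarith
    have h0 : 0 ≤ convexDist ξ A - convexDist (ξ - Finsupp.single z 1) A := by linarith
    exact mul_le_mul_of_nonneg_left (pow_le_pow_left₀ h0 h2 2) (Nat.cast_nonneg _)
  refine le_trans (Finset.sum_le_sum hpt) ?_
  have hexp : ∑ z ∈ ξ.support, (ξ z : ℝ) * (u z + ε) ^ 2
      = (∑ z ∈ ξ.support, (ξ z : ℝ) * u z ^ 2)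
        + 2 * ε * (∑ z ∈ ξ.support, (ξ z : ℝ) * u z) + ε ^ 2 * S := by
    rw [hS, Finset.mul_sum, Finset.mul_sum, ← Finset.sum_add_distrib, ← Finset.sum_add_distrib]
    exact Finset.sum_congr rfl fun z _ => by ring
  rw [hexp]
  have hA1 : (∑ z ∈ ξ.support, (ξ z : ℝ) * u z ^ 2) ≤ 1 := huadm
  have hA2 : ∑ z ∈ ξ.support, (ξ z : ℝ) * u z ≤ Real.sqrt S := by
    have h := ConvexDistAux.sum_abs_le huadm
    refine le_trans (le_of_eq ?_) h
    exact Finset.sum_congr rfl fun z _ => by rw [abs_of_nonneg (hu0 z)]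
  have hA2' : 0 ≤ ∑ z ∈ ξ.support, (ξ z : ℝ) * u z :=
    Finset.sum_nonneg fun z _ => mul_nonneg (Nat.cast_nonneg _) (hu0 z)
  have hε1 : ε ≤ 1 := min_le_left _ _
  have hεδ : ε ≤ δ / (2 * Real.sqrt S + S + 1) := min_le_right _ _
  have h3 : ε * (2 * Real.sqrt S + S + 1) ≤ δ := by
    rw [← le_div_iff₀ hden]
    exact hεδ
  have hε2 : ε ^ 2 ≤ ε := by nlinarith
  nlinarith [mul_le_mul_of_nonneg_left hA2 (by positivity : (0:ℝ) ≤ 2 * ε),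
    mul_le_mul_of_nonneg_right hε2 hS0]
end

section
/- Let X be a set, ξ : X → ℕ finitely supported, and A a nonempty set of finitely supported functions X → ℕ. Then Σ_{z ∈ supp ξ} ξ(z)·(d_T(ξ, A)² − d_T(ξ − δ_z, A)²)² ≤ 4·d_T(ξ, A)². -/
namespace CDP

open Finset Real

variable {X : Type*}

noncomputable def innerSum (ζ : X →₀ ℕ) (u : X → ℝ) (ν : X →₀ ℕ) : ℝ :=
  ∑ x ∈ ζ.support, u x * max ((ζ x : ℝ) - (ν x : ℝ)) 0

def feas (ζ : X →₀ ℕ) (u : X → ℝ) : Prop :=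
  (∑ x ∈ ζ.support, (ζ x : ℝ) * u x ^ 2) ≤ 1

noncomputable def ival (ζ : X →₀ ℕ) (A : Set (X →₀ ℕ)) (u : X → ℝ) : ℝ :=
  sInf {s : ℝ | ∃ ν ∈ A, s = innerSum ζ u ν}

theorem convexDist_eq (ζ : X →₀ ℕ) (A : Set (X →₀ ℕ)) :
    convexDist ζ A = sSup {r : ℝ | ∃ u : X → ℝ, feas ζ u ∧ r = ival ζ A u} := rfl

noncomputable def B (ζ : X →₀ ℕ) : ℝ := Real.sqrt (∑ x ∈ ζ.support, (ζ x : ℝ))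

theorem abs_innerSum_le {ζ : X →₀ ℕ} {u : X → ℝ} (hu : feas ζ u) (ν : X →₀ ℕ) :
    |innerSum ζ u ν| ≤ B ζ := by
  have h1 : |innerSum ζ u ν| ≤ ∑ x ∈ ζ.support, |u x| * (ζ x : ℝ) := by
    refine (Finset.abs_sum_le_sum_abs _ _).trans (Finset.sum_le_sum fun x hx => ?_)
    rw [abs_mul]
    refine mul_le_mul_of_nonneg_left ?_ (abs_nonneg _)
    rw [abs_of_nonneg (le_max_right _ _)]
    exact max_le (by simp) (Nat.cast_nonneg _)
  refine h1.trans ?_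
  have h2 : ∀ x ∈ ζ.support, |u x| * (ζ x : ℝ) =
      (Real.sqrt (ζ x) * |u x|) * Real.sqrt (ζ x) := by
    intro x hx
    rw [mul_comm (√(ζ x : ℝ)) (|u x|), mul_assoc, Real.mul_self_sqrt (Nat.cast_nonneg _), mul_comm]
  rw [Finset.sum_congr rfl h2]
  refine (Real.sum_mul_le_sqrt_mul_sqrt _ _ _).trans ?_
  have e1 : ∑ x ∈ ζ.support, (Real.sqrt (ζ x) * |u x|) ^ 2 =
      ∑ x ∈ ζ.support, (ζ x : ℝ) * u x ^ 2 := by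
    refine Finset.sum_congr rfl fun x hx => ?_
    rw [mul_pow, Real.sq_sqrt (Nat.cast_nonneg _), sq_abs]
  have e2 : ∑ x ∈ ζ.support, (Real.sqrt (ζ x)) ^ 2 = ∑ x ∈ ζ.support, (ζ x : ℝ) := by
    refine Finset.sum_congr rfl fun x hx => Real.sq_sqrt (Nat.cast_nonneg _)
  rw [e1, e2]
  calc Real.sqrt (∑ x ∈ ζ.support, (ζ x : ℝ) * u x ^ 2) * B ζ
      ≤ 1 * B ζ := by
        refine mul_le_mul_of_nonneg_right ?_ (Real.sqrt_nonneg _)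
        exact Real.sqrt_le_one.mpr hu
    _ = B ζ := one_mul _

theorem ivalSet_nonempty {ζ : X →₀ ℕ} {A : Set (X →₀ ℕ)} (hA : A.Nonempty) (u : X → ℝ) :
    {s : ℝ | ∃ ν ∈ A, s = innerSum ζ u ν}.Nonempty := by
  obtain ⟨ν, hν⟩ := hA
  exact ⟨innerSum ζ u ν, ν, hν, rfl⟩

theorem ivalSet_bddBelow {ζ : X →₀ ℕ} {A : Set (X →₀ ℕ)} {u : X → ℝ} (hu : feas ζ u) :
    BddBelow {s : ℝ | ∃ ν ∈ A, s = innerSum ζ u ν} := by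
  refine ⟨-B ζ, fun s hs => ?_⟩
  obtain ⟨ν, hν, rfl⟩ := hs
  exact neg_le_of_abs_le (abs_innerSum_le hu ν)

theorem ival_le {ζ : X →₀ ℕ} {A : Set (X →₀ ℕ)} {u : X → ℝ} (hu : feas ζ u)
    {ν : X →₀ ℕ} (hν : ν ∈ A) : ival ζ A u ≤ innerSum ζ u ν :=
  csInf_le (ivalSet_bddBelow hu) ⟨ν, hν, rfl⟩

theorem le_ival {ζ : X →₀ ℕ} {A : Set (X →₀ ℕ)} (hA : A.Nonempty) {u : X → ℝ} {c : ℝ}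
    (h : ∀ ν ∈ A, c ≤ innerSum ζ u ν) : c ≤ ival ζ A u :=
  le_csInf (ivalSet_nonempty hA u) (by rintro s ⟨ν, hν, rfl⟩; exact h ν hν)

theorem ival_le_B {ζ : X →₀ ℕ} {A : Set (X →₀ ℕ)} (hA : A.Nonempty) {u : X → ℝ}
    (hu : feas ζ u) : ival ζ A u ≤ B ζ := by
  obtain ⟨ν, hν⟩ := hA
  exact (ival_le hu hν).trans (le_of_abs_le (abs_innerSum_le hu ν))

theorem feas_zero (ζ : X →₀ ℕ) : feas ζ (0 : X → ℝ) := by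
  simp [feas]

theorem ival_zero {ζ : X →₀ ℕ} {A : Set (X →₀ ℕ)} (hA : A.Nonempty) :
    ival ζ A (0 : X → ℝ) = 0 := by
  refine le_antisymm ?_ ?_
  · obtain ⟨ν, hν⟩ := hA
    refine (ival_le (feas_zero ζ) hν).trans_eq ?_
    simp [innerSum]
  · exact le_ival hA fun ν hν => by simp [innerSum]

theorem supSet_bddAbove (ζ : X →₀ ℕ) (A : Set (X →₀ ℕ)) (hA : A.Nonempty) :
    BddAbove {r : ℝ | ∃ u : X → ℝ, feas ζ u ∧ r = ival ζ A u} := by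
  refine ⟨B ζ, fun r hr => ?_⟩
  obtain ⟨u, hu, rfl⟩ := hr
  exact ival_le_B hA hu

theorem zero_mem_supSet (ζ : X →₀ ℕ) {A : Set (X →₀ ℕ)} (hA : A.Nonempty) :
    (0 : ℝ) ∈ {r : ℝ | ∃ u : X → ℝ, feas ζ u ∧ r = ival ζ A u} :=
  ⟨0, feas_zero ζ, (ival_zero hA).symm⟩

theorem convexDist_nonneg (ζ : X →₀ ℕ) {A : Set (X →₀ ℕ)} (hA : A.Nonempty) :
    0 ≤ convexDist ζ A := by
  rw [convexDist_eq]
  exact le_csSup (supSet_bddAbove ζ A hA) (zero_mem_supSet ζ hA)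

theorem ival_le_convexDist {ζ : X →₀ ℕ} {A : Set (X →₀ ℕ)} (hA : A.Nonempty)
    {u : X → ℝ} (hu : feas ζ u) : ival ζ A u ≤ convexDist ζ A := by
  rw [convexDist_eq]
  exact le_csSup (supSet_bddAbove ζ A hA) ⟨u, hu, rfl⟩

theorem convexDist_le {ζ : X →₀ ℕ} {A : Set (X →₀ ℕ)} (hA : A.Nonempty) {c : ℝ}
    (h : ∀ u : X → ℝ, feas ζ u → ival ζ A u ≤ c) : convexDist ζ A ≤ c := by
  rw [convexDist_eq]
  exact csSup_le ⟨0, zero_mem_supSet ζ hA⟩ (by rintro r ⟨u, hu, rfl⟩; exact h u hu)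


theorem support_pos {ζ : X →₀ ℕ} {x : X} (hx : x ∈ ζ.support) : (0:ℝ) < (ζ x : ℝ) := by
  have := Finsupp.mem_support_iff.mp hx
  exact_mod_cast Nat.pos_of_ne_zero this

/-- Weak duality: any convex combination of configurations in `A` gives an upper
bound on the convex distance. -/
theorem convexDist_le_sqrt {ζ : X →₀ ℕ} {A : Set (X →₀ ℕ)} (hA : A.Nonempty)
    {ι : Type} (t : Finset ι) (w : ι → ℝ) (ν : ι → (X →₀ ℕ))
    (hw0 : ∀ i ∈ t, 0 ≤ w i) (hw1 : ∑ i ∈ t, w i = 1) (hν : ∀ i ∈ t, ν i ∈ A) :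
    convexDist ζ A ≤
      Real.sqrt (∑ x ∈ ζ.support,
        (∑ i ∈ t, w i * max ((ζ x : ℝ) - (ν i x : ℝ)) 0) ^ 2 / (ζ x : ℝ)) := by
  set m : X → ℝ := fun x => ∑ i ∈ t, w i * max ((ζ x : ℝ) - (ν i x : ℝ)) 0 with hm
  refine convexDist_le hA fun u hu => ?_
  have step1 : ival ζ A u ≤ ∑ i ∈ t, w i * innerSum ζ u (ν i) := by
    calc ival ζ A u = ∑ i ∈ t, w i * ival ζ A u := by rw [← Finset.sum_mul, hw1, one_mul]
      _ ≤ ∑ i ∈ t, w i * innerSum ζ u (ν i) :=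
        Finset.sum_le_sum fun i hi =>
          mul_le_mul_of_nonneg_left (ival_le hu (hν i hi)) (hw0 i hi)
  have step2 : ∑ i ∈ t, w i * innerSum ζ u (ν i) = ∑ x ∈ ζ.support, u x * m x := by
    simp only [innerSum, Finset.mul_sum, hm]
    rw [Finset.sum_comm]
    exact Finset.sum_congr rfl fun x hx => Finset.sum_congr rfl fun i hi => by ring
  have step3 : ∑ x ∈ ζ.support, u x * m x ≤
      Real.sqrt (∑ x ∈ ζ.support, m x ^ 2 / (ζ x : ℝ)) := by
    have key : ∀ x ∈ ζ.support, u x * m x =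
        (Real.sqrt (ζ x) * u x) * (m x / Real.sqrt (ζ x)) := by
      intro x hx
      have h0 : (0:ℝ) < Real.sqrt (ζ x) := Real.sqrt_pos.mpr (support_pos hx)
      field_simp
    rw [Finset.sum_congr rfl key]
    refine (Real.sum_mul_le_sqrt_mul_sqrt _ _ _).trans ?_
    have e1 : ∑ x ∈ ζ.support, (Real.sqrt (ζ x) * u x) ^ 2 =
        ∑ x ∈ ζ.support, (ζ x : ℝ) * u x ^ 2 :=
      Finset.sum_congr rfl fun x hx => by rw [mul_pow, Real.sq_sqrt (Nat.cast_nonneg _)]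
    have e2 : ∑ x ∈ ζ.support, (m x / Real.sqrt (ζ x)) ^ 2 =
        ∑ x ∈ ζ.support, m x ^ 2 / (ζ x : ℝ) :=
      Finset.sum_congr rfl fun x hx => by
        rw [div_pow, Real.sq_sqrt (Nat.cast_nonneg _)]
    rw [e1, e2]
    calc Real.sqrt (∑ x ∈ ζ.support, (ζ x : ℝ) * u x ^ 2) *
          Real.sqrt (∑ x ∈ ζ.support, m x ^ 2 / (ζ x : ℝ))
        ≤ 1 * Real.sqrt (∑ x ∈ ζ.support, m x ^ 2 / (ζ x : ℝ)) :=
          mul_le_mul_of_nonneg_right (Real.sqrt_le_one.mpr hu) (Real.sqrt_nonneg _)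
      _ = _ := one_mul _
  calc ival ζ A u ≤ ∑ x ∈ ζ.support, u x * m x := step1.trans step2.le
    _ ≤ _ := step3


section Strong

open RealInnerProductSpace

variable (ξ : X →₀ ℕ)

/-- The renormalized deficiency vector of a configuration `ν`, as a point of the
Euclidean space indexed by the support of `ξ`. -/
noncomputable def Phi (ν : X →₀ ℕ) : EuclideanSpace ℝ ↥ξ.support :=
  WithLp.toLp 2 fun i => max ((ξ ↑i : ℝ) - (ν ↑i : ℝ)) 0 / Real.sqrt (ξ ↑i)

open Classical in
/-- Reading off an `X`-indexed weight function from a vector. -/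
noncomputable def mOf (q : EuclideanSpace ℝ ↥ξ.support) : X → ℝ :=
  fun x => if h : x ∈ ξ.support then Real.sqrt (ξ x) * q ⟨x, h⟩ else 0

theorem mOf_coe (q : EuclideanSpace ℝ ↥ξ.support) (i : ↥ξ.support) :
    mOf ξ q ↑i = Real.sqrt (ξ ↑i) * q i := by
  rw [mOf]
  rw [dif_pos i.2]

theorem q_coe_of_mOf (q : EuclideanSpace ℝ ↥ξ.support) (i : ↥ξ.support) :
    q i = mOf ξ q ↑i / Real.sqrt (ξ ↑i) := by
  rw [mOf_coe]
  have h0 : (0:ℝ) < Real.sqrt (ξ ↑i) := Real.sqrt_pos.mpr (support_pos i.2)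
  field_simp

theorem sum_support_eq (f : X → ℝ) :
    ∑ x ∈ ξ.support, f x = ∑ i : ↥ξ.support, f ↑i := by
  rw [← Finset.sum_attach ξ.support f, Finset.univ_eq_attach]

/-- Coordinate identity: weighted sum of squares of `mOf q` equals `‖q‖²`. -/
theorem sum_mOf_sq (q : EuclideanSpace ℝ ↥ξ.support) :
    ∑ x ∈ ξ.support, (mOf ξ q x) ^ 2 / (ξ x : ℝ) = ‖q‖ ^ 2 := by
  have hn : ‖q‖ ^ 2 = ∑ i : ↥ξ.support, (q i) ^ 2 := by
    rw [EuclideanSpace.norm_eq, Real.sq_sqrt (by positivity)]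
    exact Finset.sum_congr rfl fun i _ => by rw [Real.norm_eq_abs, sq_abs]
  rw [hn, sum_support_eq]
  refine Finset.sum_congr rfl fun i _ => ?_
  rw [mOf_coe, mul_pow, Real.sq_sqrt (Nat.cast_nonneg _)]
  have h0 : (0:ℝ) < (ξ ↑i : ℝ) := support_pos i.2
  field_simp

/-- Coordinate identity: the inner product against a generator. -/
theorem inner_Phi (q : EuclideanSpace ℝ ↥ξ.support) (ν : X →₀ ℕ) :
    ⟪q, Phi ξ ν⟫ =
      ∑ x ∈ ξ.support, mOf ξ q x * max ((ξ x : ℝ) - (ν x : ℝ)) 0 / (ξ x : ℝ) := by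
  rw [PiLp.inner_apply, sum_support_eq]
  refine Finset.sum_congr rfl fun i _ => ?_
  rw [RCLike.inner_apply, conj_trivial, Phi, PiLp.toLp_apply, mOf_coe]
  have h0 : (0:ℝ) < Real.sqrt (ξ ↑i) := Real.sqrt_pos.mpr (support_pos i.2)
  have h1 : Real.sqrt (ξ ↑i) * Real.sqrt (ξ ↑i) = (ξ ↑i : ℝ) :=
    Real.mul_self_sqrt (Nat.cast_nonneg _)
  rw [mul_comm (max _ _ / _), ← mul_div_assoc, div_eq_div_iff (ne_of_gt h0) (ne_of_gt (support_pos i.2))]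
  linear_combination (-(q i * (((ξ ↑i : ℝ) - (ν ↑i : ℝ)) ⊔ 0))) * h1

theorem sum_apply' {ι : Type} (t : Finset ι) (f : ι → EuclideanSpace ℝ ↥ξ.support)
    (j : ↥ξ.support) : (∑ i ∈ t, f i) j = ∑ i ∈ t, f i j := by
  classical
  induction t using Finset.induction_on with
  | empty => rfl
  | @insert a s ha ih => rw [Finset.sum_insert ha, Finset.sum_insert ha, ← ih]; rfl

theorem coord_abs_le_norm (q : EuclideanSpace ℝ ↥ξ.support) (i : ↥ξ.support) :
    |q i| ≤ ‖q‖ := by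
  rw [EuclideanSpace.norm_eq]
  rw [show |q i| = Real.sqrt ((q i)^2) by rw [Real.sqrt_sq_eq_abs]]
  refine Real.sqrt_le_sqrt ?_
  refine Finset.single_le_sum (f := fun j => ‖q j‖ ^ 2) (fun j _ => by positivity) (Finset.mem_univ i) |>.trans_eq' ?_
  rw [Real.norm_eq_abs, sq_abs]

/-- Hull membership gives a finite convex-combination representation of `mOf`. -/
theorem hull_combo {A : Set (X →₀ ℕ)} {p : EuclideanSpace ℝ ↥ξ.support}
    (hp : p ∈ convexHull ℝ (Phi ξ '' A)) :
    ∃ (ι : Type) (t : Finset ι) (w : ι → ℝ) (ν : ι → (X →₀ ℕ)),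
      (∀ i ∈ t, 0 ≤ w i) ∧ (∑ i ∈ t, w i = 1) ∧ (∀ i ∈ t, ν i ∈ A) ∧
      ∀ x ∈ ξ.support,
        mOf ξ p x = ∑ i ∈ t, w i * max ((ξ x : ℝ) - (ν i x : ℝ)) 0 := by
  rw [_root_.convexHull_eq] at hp
  obtain ⟨ι, t, w, z, hw0, hw1, hz, hcm⟩ := hp
  have : ∀ i, ∃ ν : X →₀ ℕ, (i ∈ t → ν ∈ A ∧ Phi ξ ν = z i) := by
    intro i
    by_cases hi : i ∈ t
    · obtain ⟨ν, hν, hνz⟩ := hz i hi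
      exact ⟨ν, fun _ => ⟨hν, hνz⟩⟩
    · obtain ⟨ν₀, _⟩ : ∃ ν : X →₀ ℕ, True := ⟨0, trivial⟩
      exact ⟨ν₀, fun h => absurd h hi⟩
  choose ν hν using this
  refine ⟨ι, t, w, ν, hw0, hw1, fun i hi => (hν i hi).1, ?_⟩
  intro x hx
  have hps : p = ∑ i ∈ t, w i • z i := by
    rw [← hcm, Finset.centerMass_eq_of_sum_1 _ _ hw1]
  have hcoord : p ⟨x, hx⟩ = ∑ i ∈ t, w i * z i ⟨x, hx⟩ := by
    rw [hps, sum_apply']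
    exact Finset.sum_congr rfl fun i _ => rfl
  have : mOf ξ p x = Real.sqrt (ξ x) * p ⟨x, hx⟩ := by rw [mOf, dif_pos hx]
  rw [this, hcoord, Finset.mul_sum]
  refine Finset.sum_congr rfl fun i hi => ?_
  rw [← (hν i hi).2, Phi, PiLp.toLp_apply]
  have h0 : (0:ℝ) < Real.sqrt (ξ x) := Real.sqrt_pos.mpr (support_pos hx)
  field_simp
end Strong


section StrongMain

open RealInnerProductSpace

/-- Strong duality for the convex distance: there is an "optimal mean deficiency"
function `m` realizing the distance. -/
theorem strong_duality {A : Set (X →₀ ℕ)} (hA : A.Nonempty) (ξ : X →₀ ℕ) :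
    ∃ m : X → ℝ,
      (∀ x ∈ ξ.support, 0 ≤ m x ∧ m x ≤ (ξ x : ℝ)) ∧
      (∑ x ∈ ξ.support, m x ^ 2 / (ξ x : ℝ)) = convexDist ξ A ^ 2 ∧
      (∀ ν ∈ A, convexDist ξ A ^ 2 ≤
        ∑ x ∈ ξ.support, m x * max ((ξ x : ℝ) - (ν x : ℝ)) 0 / (ξ x : ℝ)) ∧
      (∀ ε > 0, ∃ (ι : Type) (t : Finset ι) (w : ι → ℝ) (ν : ι → (X →₀ ℕ)),
        (∀ i ∈ t, 0 ≤ w i) ∧ (∑ i ∈ t, w i = 1) ∧ (∀ i ∈ t, ν i ∈ A) ∧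
        ∀ x ∈ ξ.support,
          |(∑ i ∈ t, w i * max ((ξ x : ℝ) - (ν i x : ℝ)) 0) - m x| ≤ (ξ x : ℝ) * ε) := by
  classical
  set S : Set (EuclideanSpace ℝ ↥ξ.support) := closure (convexHull ℝ (Phi ξ '' A)) with hS
  have hgenS : ∀ ν ∈ A, Phi ξ ν ∈ S := fun ν hν =>
    subset_closure (subset_convexHull ℝ _ ⟨ν, hν, rfl⟩)
  have hSne : S.Nonempty := by
    obtain ⟨ν₀, hν₀⟩ := hA
    exact ⟨Phi ξ ν₀, hgenS ν₀ hν₀⟩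
  have hSconv : Convex ℝ S := (convex_convexHull ℝ _).closure
  obtain ⟨v, hvS, hv⟩ :=
    exists_norm_eq_iInf_of_complete_convex hSne (isClosed_closure.isComplete) hSconv 0
  have hvar : ∀ w ∈ S, ‖v‖ ^ 2 ≤ ⟪v, w⟫ := by
    have h := (norm_eq_iInf_iff_real_inner_le_zero hSconv hvS).mp hv
    intro w hw
    have h2 := h w hw
    rw [zero_sub, inner_sub_right, inner_neg_left, inner_neg_left,
      real_inner_self_eq_norm_sq] at h2
    linarith
  -- membership in the coordinate box
  have hbox : ∀ w ∈ S, ∀ i : ↥ξ.support, 0 ≤ w i ∧ w i ≤ Real.sqrt (ξ ↑i) := by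
    have hBc : Convex ℝ {w : EuclideanSpace ℝ ↥ξ.support |
        ∀ i : ↥ξ.support, w i ∈ Set.Icc (0:ℝ) (Real.sqrt (ξ ↑i))} := by
      intro w1 h1 w2 h2 a b ha hb hab
      intro i
      exact convex_Icc (0:ℝ) _ (h1 i) (h2 i) ha hb hab
    have hBcl : IsClosed {w : EuclideanSpace ℝ ↥ξ.support |
        ∀ i : ↥ξ.support, w i ∈ Set.Icc (0:ℝ) (Real.sqrt (ξ ↑i))} := by
      have : {w : EuclideanSpace ℝ ↥ξ.support |
          ∀ i : ↥ξ.support, w i ∈ Set.Icc (0:ℝ) (Real.sqrt (ξ ↑i))} =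
          ⋂ i : ↥ξ.support, ((fun w : EuclideanSpace ℝ ↥ξ.support => w i) ⁻¹'
            Set.Icc (0:ℝ) (Real.sqrt (ξ ↑i))) := by
        ext w; simp [Set.mem_iInter]
      rw [this]
      exact isClosed_iInter fun i =>
        isClosed_Icc.preimage (EuclideanSpace.proj (𝕜 := ℝ) i).continuous
    have hgen : Phi ξ '' A ⊆ {w : EuclideanSpace ℝ ↥ξ.support |
        ∀ i : ↥ξ.support, w i ∈ Set.Icc (0:ℝ) (Real.sqrt (ξ ↑i))} := by
      rintro _ ⟨ν, hν, rfl⟩ i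
      constructor
      · exact div_nonneg (le_max_right _ _) (Real.sqrt_nonneg _)
      · show max ((ξ ↑i : ℝ) - (ν ↑i : ℝ)) 0 / Real.sqrt (ξ ↑i) ≤ Real.sqrt (ξ ↑i)
        rw [div_le_iff₀ (Real.sqrt_pos.mpr (support_pos i.2)),
          Real.mul_self_sqrt (Nat.cast_nonneg _)]
        exact max_le (by simp) (Nat.cast_nonneg _)
    have := closure_minimal (convexHull_min hgen hBc) hBcl
    exact fun w hw i => this hw i
  set m : X → ℝ := mOf ξ v with hm
  -- the two directions of `convexDist ξ A = ‖v‖`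
  have hdle : convexDist ξ A ≤ ‖v‖ := by
    refine le_of_forall_pos_le_add fun ε hε => ?_
    obtain ⟨p, hp, hdist⟩ := Metric.mem_closure_iff.mp hvS ε hε
    obtain ⟨ι, t, w, ν, h0, h1, hmem, heq⟩ := hull_combo ξ hp
    refine (convexDist_le_sqrt hA t w ν h0 h1 hmem).trans ?_
    have e : ∑ x ∈ ξ.support,
        (∑ i ∈ t, w i * max ((ξ x : ℝ) - (ν i x : ℝ)) 0) ^ 2 / (ξ x : ℝ) = ‖p‖ ^ 2 := by
      rw [← sum_mOf_sq ξ p]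
      exact Finset.sum_congr rfl fun x hx => by rw [heq x hx]
    rw [e, Real.sqrt_sq (norm_nonneg _)]
    have : ‖p‖ ≤ ‖v‖ + ‖p - v‖ := by
      have hvp : v + (p - v) = p := by abel
      calc ‖p‖ = ‖v + (p - v)‖ := by rw [hvp]
        _ ≤ ‖v‖ + ‖p - v‖ := norm_add_le _ _
    refine this.trans ?_
    have : ‖p - v‖ = dist v p := by rw [dist_eq_norm, norm_sub_rev]
    linarith [this ▸ hdist.le]
  have hdge : ‖v‖ ≤ convexDist ξ A := by
    rcases eq_or_lt_of_le (norm_nonneg v) with h0 | h0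
    · rw [← h0]; exact convexDist_nonneg ξ hA
    · set u : X → ℝ := fun x => m x / ((ξ x : ℝ) * ‖v‖) with hu
      have hfeas : feas ξ u := by
        have e : ∀ x ∈ ξ.support, (ξ x : ℝ) * u x ^ 2 = m x ^ 2 / (ξ x : ℝ) / ‖v‖ ^ 2 := by
          intro x hx
          have hx0 := support_pos hx
          rw [hu]
          field_simp
        have : (∑ x ∈ ξ.support, (ξ x : ℝ) * u x ^ 2) = 1 := by
          rw [Finset.sum_congr rfl e, ← Finset.sum_div, sum_mOf_sq ξ v]
          exact div_self (by positivity)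
        exact this.le
      have hlow : ∀ ν ∈ A, ‖v‖ ≤ innerSum ξ u ν := by
        intro ν hν
        have hι := hvar (Phi ξ ν) (hgenS ν hν)
        rw [inner_Phi] at hι
        have e : innerSum ξ u ν =
            (∑ x ∈ ξ.support, m x * max ((ξ x : ℝ) - (ν x : ℝ)) 0 / (ξ x : ℝ)) / ‖v‖ := by
          rw [innerSum, Finset.sum_div]
          refine Finset.sum_congr rfl fun x hx => ?_
          have hx0 := support_pos hx
          rw [hu]
          field_simp
        rw [e, le_div_iff₀ h0]
        calc ‖v‖ * ‖v‖ = ‖v‖ ^ 2 := by ring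
          _ ≤ _ := hι
      exact (le_ival hA hlow).trans (ival_le_convexDist hA hfeas)
  have hdv : convexDist ξ A = ‖v‖ := le_antisymm hdle hdge
  refine ⟨m, ?_, ?_, ?_, ?_⟩
  · intro x hx
    have hbx := hbox v hvS ⟨x, hx⟩
    have : m x = Real.sqrt (ξ x) * v ⟨x, hx⟩ := by rw [hm, mOf]; rw [dif_pos hx]
    constructor
    · rw [this]; exact mul_nonneg (Real.sqrt_nonneg _) hbx.1
    · rw [this]
      calc Real.sqrt (ξ x) * v ⟨x, hx⟩ ≤ Real.sqrt (ξ x) * Real.sqrt (ξ x) :=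
            mul_le_mul_of_nonneg_left hbx.2 (Real.sqrt_nonneg _)
        _ = (ξ x : ℝ) := Real.mul_self_sqrt (Nat.cast_nonneg _)
  · rw [hdv]; exact sum_mOf_sq ξ v
  · intro ν hν
    rw [hdv, ← inner_Phi]
    exact hvar (Phi ξ ν) (hgenS ν hν)
  · intro ε hε
    obtain ⟨p, hp, hdist⟩ := Metric.mem_closure_iff.mp hvS ε hε
    obtain ⟨ι, t, w, ν, h0, h1, hmem, heq⟩ := hull_combo ξ hp
    refine ⟨ι, t, w, ν, h0, h1, hmem, fun x hx => ?_⟩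
    rw [← heq x hx]
    have e1 : mOf ξ p x - m x = Real.sqrt (ξ x) * (p ⟨x, hx⟩ - v ⟨x, hx⟩) := by
      rw [hm, mOf, mOf]
      rw [dif_pos hx, dif_pos hx]
      ring
    rw [e1, abs_mul, abs_of_nonneg (Real.sqrt_nonneg _)]
    have e2 : p ⟨x, hx⟩ - v ⟨x, hx⟩ = (p - v) (⟨x, hx⟩ : ↥ξ.support) := rfl
    have e3 : |p ⟨x, hx⟩ - v ⟨x, hx⟩| ≤ ‖p - v‖ := by
      rw [e2]; exact coord_abs_le_norm ξ (p - v) _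
    have e4 : ‖p - v‖ ≤ ε := by
      rw [show ‖p - v‖ = dist v p by rw [dist_eq_norm, norm_sub_rev]]
      exact hdist.le
    have hξ1 : (1:ℝ) ≤ (ξ x : ℝ) := by
      have := Finsupp.mem_support_iff.mp hx
      exact_mod_cast Nat.one_le_iff_ne_zero.mpr this
    have hsq : Real.sqrt (ξ x) ≤ (ξ x : ℝ) := by
      nlinarith [Real.sq_sqrt (Nat.cast_nonneg (α := ℝ) (ξ x)), Real.sqrt_nonneg ((ξ x : ℝ))]
    calc Real.sqrt (ξ x) * |p ⟨x, hx⟩ - v ⟨x, hx⟩| ≤ Real.sqrt (ξ x) * ε := by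
          refine mul_le_mul_of_nonneg_left (e3.trans e4) (Real.sqrt_nonneg _)
      _ ≤ (ξ x : ℝ) * ε := mul_le_mul_of_nonneg_right hsq hε.le
end StrongMain


section Sides

variable {A : Set (X →₀ ℕ)} [DecidableEq X]

theorem xi'_apply_ne (ξ : X →₀ ℕ) (z : X) {x : X} (hx : x ≠ z) :
    ((ξ - Finsupp.single z 1) : X →₀ ℕ) x = ξ x := by
  rw [Finsupp.tsub_apply, Finsupp.single_apply, if_neg (fun h => hx h.symm), Nat.sub_zero]

theorem xi'_apply_self (ξ : X →₀ ℕ) (z : X) :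
    ((ξ - Finsupp.single z 1) : X →₀ ℕ) z = ξ z - 1 := by
  rw [Finsupp.tsub_apply, Finsupp.single_apply, if_pos rfl]

theorem xi'_support_subset (ξ : X →₀ ℕ) (z : X) :
    (ξ - Finsupp.single z 1).support ⊆ ξ.support := by
  intro x hx
  rw [Finsupp.mem_support_iff] at hx ⊢
  intro h0
  apply hx
  rw [Finsupp.tsub_apply, h0, Nat.zero_sub]

theorem xi'_support_erase (ξ : X →₀ ℕ) (z : X) :
    (ξ - Finsupp.single z 1).support.erase z = ξ.support.erase z := by
  ext x
  simp only [Finset.mem_erase, Finsupp.mem_support_iff]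
  constructor
  · rintro ⟨hxz, h⟩
    refine ⟨hxz, ?_⟩
    rwa [xi'_apply_ne ξ z hxz] at h
  · rintro ⟨hxz, h⟩
    refine ⟨hxz, ?_⟩
    rwa [xi'_apply_ne ξ z hxz]

theorem sum_split (z : X) (s : Finset X) (f : X → ℝ) :
    ∑ x ∈ s, f x = (∑ x ∈ s.erase z, f x) + (if z ∈ s then f z else 0) := by
  by_cases h : z ∈ s
  · rw [if_pos h, ← Finset.sum_erase_add s f h]
  · rw [if_neg h, Finset.erase_eq_of_notMem h, add_zero]

/-- Side A: `d² - d_z² ≤ 2 m z / ξ z`. -/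
theorem sideA (hA : A.Nonempty) (ξ : X →₀ ℕ) (m : X → ℝ)
    (hm0 : ∀ x ∈ ξ.support, 0 ≤ m x)
    (hsum : ∑ x ∈ ξ.support, m x ^ 2 / (ξ x : ℝ) = convexDist ξ A ^ 2)
    (hvar : ∀ ν ∈ A, convexDist ξ A ^ 2 ≤
      ∑ x ∈ ξ.support, m x * max ((ξ x : ℝ) - (ν x : ℝ)) 0 / (ξ x : ℝ))
    {z : X} (hz : z ∈ ξ.support) :
    convexDist ξ A ^ 2 - convexDist (ξ - Finsupp.single z 1) A ^ 2 ≤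
      2 * m z / (ξ z : ℝ) := by
  classical
  set ξ' := ξ - Finsupp.single z 1 with hξ'
  set d := convexDist ξ A with hd
  set dz := convexDist ξ' A with hdz
  have hd0 : 0 ≤ d := convexDist_nonneg ξ hA
  have hdz0 : 0 ≤ dz := convexDist_nonneg ξ' hA
  have hζz : (0:ℝ) < (ξ z : ℝ) := support_pos hz
  have hmz0 : 0 ≤ m z := hm0 z hz
  by_cases hcmp : d ≤ dz
  · have : d ^ 2 - dz ^ 2 ≤ 0 := by nlinarith
    refine this.trans (by positivity)
  · push_neg at hcmp
    have hdpos : 0 < d := lt_of_le_of_lt hdz0 hcmp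
    set u : X → ℝ := fun x => m x / ((ξ x : ℝ) * d) with hu
    have hu_nonneg : ∀ x ∈ ξ.support, 0 ≤ u x := fun x hx =>
      div_nonneg (hm0 x hx) (mul_nonneg (Nat.cast_nonneg _) hd0)
    have hfeasξ : feas ξ u := by
      have e : ∀ x ∈ ξ.support, (ξ x : ℝ) * u x ^ 2 = m x ^ 2 / (ξ x : ℝ) / d ^ 2 := by
        intro x hx
        have hx0 := support_pos hx
        rw [hu]
        field_simp
      have : (∑ x ∈ ξ.support, (ξ x : ℝ) * u x ^ 2) = 1 := by
        rw [Finset.sum_congr rfl e, ← Finset.sum_div, hsum]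
        exact div_self (by positivity)
      exact this.le
    have hfeasξ' : feas ξ' u := by
      refine le_trans ?_ hfeasξ
      calc ∑ x ∈ ξ'.support, (ξ' x : ℝ) * u x ^ 2
          ≤ ∑ x ∈ ξ'.support, (ξ x : ℝ) * u x ^ 2 := by
            refine Finset.sum_le_sum fun x hx => ?_
            refine mul_le_mul_of_nonneg_right ?_ (sq_nonneg _)
            have hle : ξ' x ≤ ξ x := by
              rw [hξ', Finsupp.tsub_apply]
              exact Nat.sub_le _ _
            exact_mod_cast hle
        _ ≤ ∑ x ∈ ξ.support, (ξ x : ℝ) * u x ^ 2 := by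
            refine Finset.sum_le_sum_of_subset_of_nonneg (xi'_support_subset ξ z) fun x hx _ => ?_
            exact mul_nonneg (Nat.cast_nonneg _) (sq_nonneg _)
    have hd_le : ∀ ν ∈ A, d ≤ innerSum ξ u ν := by
      intro ν hν
      have hι := hvar ν hν
      have e : innerSum ξ u ν =
          (∑ x ∈ ξ.support, m x * max ((ξ x : ℝ) - (ν x : ℝ)) 0 / (ξ x : ℝ)) / d := by
        rw [innerSum, Finset.sum_div]
        refine Finset.sum_congr rfl fun x hx => ?_
        have hx0 := support_pos hx
        rw [hu]
        field_simp
      rw [e, le_div_iff₀ hdpos]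
      calc d * d = d ^ 2 := by ring
        _ ≤ _ := hι
    have hcomp : ∀ ν ∈ A, innerSum ξ u ν ≤ innerSum ξ' u ν + u z := by
      intro ν hν
      have e1 : ∑ x ∈ ξ.support.erase z, u x * max ((ξ x : ℝ) - (ν x : ℝ)) 0 =
          ∑ x ∈ ξ'.support.erase z, u x * max ((ξ' x : ℝ) - (ν x : ℝ)) 0 := by
        rw [hξ', xi'_support_erase]
        refine Finset.sum_congr rfl fun x hx => ?_
        rw [xi'_apply_ne ξ z (Finset.mem_erase.mp hx).1]
      rw [innerSum, innerSum, sum_split z ξ.support, sum_split z ξ'.support, e1]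
      rw [if_pos hz]
      have hzu : 0 ≤ u z := hu_nonneg z hz
      have hmax : u z * max ((ξ z : ℝ) - (ν z : ℝ)) 0 ≤
          (if z ∈ ξ'.support then u z * max ((ξ' z : ℝ) - (ν z : ℝ)) 0 else 0) + u z := by
        by_cases hzz : z ∈ ξ'.support
        · rw [if_pos hzz]
          have h1 : ((ξ' z : ℕ) : ℝ) = (ξ z : ℝ) - 1 := by
            have hone : 1 ≤ ξ z := Nat.one_le_iff_ne_zero.mpr (Finsupp.mem_support_iff.mp hz)
            rw [hξ', xi'_apply_self ξ z, Nat.cast_sub hone, Nat.cast_one]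
          rw [h1]
          have hmx : max ((ξ z : ℝ) - (ν z : ℝ)) 0 ≤ max ((ξ z : ℝ) - 1 - (ν z : ℝ)) 0 + 1 := by
            rcases le_total ((ξ z : ℝ) - (ν z : ℝ)) 0 with h | h
            · rw [max_eq_right h]; positivity
            · rw [max_eq_left h]
              have := le_max_left ((ξ z : ℝ) - 1 - (ν z : ℝ)) 0
              linarith
          calc u z * max ((ξ z : ℝ) - (ν z : ℝ)) 0
              ≤ u z * (max ((ξ z : ℝ) - 1 - (ν z : ℝ)) 0 + 1) :=
                mul_le_mul_of_nonneg_left hmx hzu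
            _ = u z * max ((ξ z : ℝ) - 1 - (ν z : ℝ)) 0 + u z := by ring
        · rw [if_neg hzz]
          have h1 : ξ' z = 0 := Finsupp.notMem_support_iff.mp hzz
          have h2 : ξ z ≤ 1 := by
            rw [hξ', xi'_apply_self ξ z] at h1
            omega
          have h3 : max ((ξ z : ℝ) - (ν z : ℝ)) 0 ≤ 1 := by
            refine max_le ?_ (by norm_num)
            have : (ξ z : ℝ) ≤ 1 := by exact_mod_cast h2
            have : (0:ℝ) ≤ (ν z : ℝ) := Nat.cast_nonneg _
            linarith
          calc u z * max ((ξ z : ℝ) - (ν z : ℝ)) 0 ≤ u z * 1 :=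
                mul_le_mul_of_nonneg_left h3 hzu
            _ = 0 + u z := by ring
      linarith
    have hkey : d - u z ≤ dz := by
      refine le_trans ?_ (ival_le_convexDist hA hfeasξ')
      refine le_ival hA fun ν hν => ?_
      have := (hd_le ν hν).trans (hcomp ν hν)
      linarith
    have huz : u z = m z / ((ξ z : ℝ) * d) := rfl
    have h1 : (d - dz) * d ≤ m z / (ξ z : ℝ) := by
      have : d - dz ≤ m z / ((ξ z : ℝ) * d) := by rw [← huz]; linarith
      have h2 := mul_le_mul_of_nonneg_right this hd0
      calc (d - dz) * d ≤ m z / ((ξ z : ℝ) * d) * d := h2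
        _ = m z / (ξ z : ℝ) := by field_simp
    have hA1 : (d - dz) * dz ≤ (d - dz) * d :=
      mul_le_mul_of_nonneg_left hcmp.le (sub_nonneg.mpr hcmp.le)
    have e2 : 2 * m z / (ξ z : ℝ) = 2 * (m z / (ξ z : ℝ)) := by ring
    rw [e2]
    nlinarith [h1, hA1]
end Sides


section SideB

variable {A : Set (X →₀ ℕ)} [DecidableEq X]

set_option maxHeartbeats 1600000 in
/-- Side B: `d_z² - d² ≤ 2 m z / ξ z`. -/
theorem sideB (hA : A.Nonempty) (ξ : X →₀ ℕ) (m : X → ℝ)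
    (hm : ∀ x ∈ ξ.support, 0 ≤ m x ∧ m x ≤ (ξ x : ℝ))
    (hsum : ∑ x ∈ ξ.support, m x ^ 2 / (ξ x : ℝ) = convexDist ξ A ^ 2)
    (happrox : ∀ ε > 0, ∃ (ι : Type) (t : Finset ι) (w : ι → ℝ) (ν : ι → (X →₀ ℕ)),
        (∀ i ∈ t, 0 ≤ w i) ∧ (∑ i ∈ t, w i = 1) ∧ (∀ i ∈ t, ν i ∈ A) ∧
        ∀ x ∈ ξ.support,
          |(∑ i ∈ t, w i * max ((ξ x : ℝ) - (ν i x : ℝ)) 0) - m x| ≤ (ξ x : ℝ) * ε)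
    {z : X} (hz : z ∈ ξ.support) :
    convexDist (ξ - Finsupp.single z 1) A ^ 2 - convexDist ξ A ^ 2 ≤
      2 * m z / (ξ z : ℝ) := by
  set ξ' : X →₀ ℕ := ξ - Finsupp.single z 1 with hξ'
  set d := convexDist ξ A with hd
  set dz := convexDist ξ' A with hdz
  have hdz0 : 0 ≤ dz := convexDist_nonneg ξ' hA
  have hζz : (0:ℝ) < (ξ z : ℝ) := support_pos hz
  have haR : (1:ℝ) ≤ (ξ z : ℝ) := by
    have := Finsupp.mem_support_iff.mp hz
    exact_mod_cast Nat.one_le_iff_ne_zero.mpr this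
  have hmz := hm z hz
  set M := min (m z) ((ξ z : ℝ) - 1) with hM
  set T := (if z ∈ ξ'.support then M ^ 2 / ((ξ z : ℝ) - 1) else 0) with hT
  set C := (∑ x ∈ ξ.support, 3 * (ξ x : ℝ)) + 3 * (ξ z : ℝ) ^ 2 with hC
  have hC0 : 0 ≤ C := by
    rw [hC]
    have : (0:ℝ) ≤ ∑ x ∈ ξ.support, 3 * (ξ x : ℝ) :=
      Finset.sum_nonneg fun x _ => by positivity
    positivity
  have hz2 : z ∈ ξ'.support ↔ 2 ≤ ξ z := by
    rw [Finsupp.mem_support_iff, hξ', xi'_apply_self ξ z]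
    have := Finsupp.mem_support_iff.mp hz
    omega
  have herase : ∑ x ∈ ξ.support.erase z, m x ^ 2 / (ξ x : ℝ) =
      d ^ 2 - m z ^ 2 / (ξ z : ℝ) := by
    have h := Finset.sum_erase_add ξ.support (fun x => m x ^ 2 / (ξ x : ℝ)) hz
    linarith [h, hsum]
  have step1 : ∀ ε : ℝ, 0 < ε → ε ≤ 1 →
      dz ^ 2 ≤ d ^ 2 - m z ^ 2 / (ξ z : ℝ) + T + ε * C := by
    intro ε hε hε1
    obtain ⟨ι, t, w, ν, hw0, hw1, hmem, happ⟩ := happrox ε hε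
    have hwd := convexDist_le_sqrt (ζ := ξ') hA t w ν hw0 hw1 hmem
    set m' : X → ℝ := fun x => ∑ i ∈ t, w i * max ((ξ' x : ℝ) - (ν i x : ℝ)) 0 with hm'
    set R := ∑ x ∈ ξ'.support, m' x ^ 2 / (ξ' x : ℝ) with hR
    have hR0 : 0 ≤ R := by
      rw [hR]
      exact Finset.sum_nonneg fun x hx => div_nonneg (sq_nonneg _) (Nat.cast_nonneg _)
    have hdzR : dz ^ 2 ≤ R := by
      calc dz ^ 2 ≤ (Real.sqrt R) ^ 2 := pow_le_pow_left₀ hdz0 hwd 2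
        _ = R := Real.sq_sqrt hR0
    have hm'_nonneg : ∀ x : X, 0 ≤ m' x := fun x =>
      Finset.sum_nonneg fun i hi => mul_nonneg (hw0 i hi) (le_max_right _ _)
    have hm'_eq : ∀ x : X, x ≠ z →
        m' x = ∑ i ∈ t, w i * max ((ξ x : ℝ) - (ν i x : ℝ)) 0 := by
      intro x hx
      rw [hm']
      refine Finset.sum_congr rfl fun i hi => ?_
      rw [hξ', xi'_apply_ne ξ z hx]
    have hsplit : R = (∑ x ∈ ξ.support.erase z, m' x ^ 2 / (ξ x : ℝ)) +
        (if z ∈ ξ'.support then m' z ^ 2 / (ξ' z : ℝ) else 0) := by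
      rw [hR, sum_split z]
      congr 1
      rw [hξ', xi'_support_erase]
      refine Finset.sum_congr rfl fun x hx => ?_
      rw [xi'_apply_ne ξ z (Finset.mem_erase.mp hx).1]
    have hboundE : ∑ x ∈ ξ.support.erase z, m' x ^ 2 / (ξ x : ℝ) ≤
        (∑ x ∈ ξ.support.erase z, m x ^ 2 / (ξ x : ℝ)) +
          ε * (∑ x ∈ ξ.support, 3 * (ξ x : ℝ)) := by
      have hterm : ∀ x ∈ ξ.support.erase z,
          m' x ^ 2 / (ξ x : ℝ) ≤ m x ^ 2 / (ξ x : ℝ) + 3 * (ξ x : ℝ) * ε := by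
        intro x hx
        have hxz := (Finset.mem_erase.mp hx).1
        have hxs := Finset.mem_of_mem_erase hx
        have hξx : (0:ℝ) < (ξ x : ℝ) := support_pos hxs
        have hξx1 : (1:ℝ) ≤ (ξ x : ℝ) := by
          have := Finsupp.mem_support_iff.mp hxs
          exact_mod_cast Nat.one_le_iff_ne_zero.mpr this
        have hmx := hm x hxs
        have hub : m' x ≤ m x + (ξ x : ℝ) * ε := by
          rw [hm'_eq x hxz]
          have := (abs_le.mp (happ x hxs)).2
          linarith
        have hsq : m' x ^ 2 ≤ (m x + (ξ x : ℝ) * ε) ^ 2 :=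
          pow_le_pow_left₀ (hm'_nonneg x) hub 2
        have hnum : m' x ^ 2 ≤ m x ^ 2 + 3 * (ξ x : ℝ) ^ 2 * ε := by
          have hp1 : m x * ((ξ x : ℝ) * ε) ≤ (ξ x : ℝ) * ((ξ x : ℝ) * ε) :=
            mul_le_mul_of_nonneg_right hmx.2 (by positivity)
          have hp2 : ((ξ x : ℝ) * ε) * ((ξ x : ℝ) * ε) ≤ ((ξ x : ℝ) * ε) * (ξ x : ℝ) := by
            refine mul_le_mul_of_nonneg_left ?_ (by positivity)
            calc (ξ x : ℝ) * ε ≤ (ξ x : ℝ) * 1 := by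
                  exact mul_le_mul_of_nonneg_left hε1 hξx.le
              _ = (ξ x : ℝ) := mul_one _
          nlinarith [hsq, hp1, hp2]
        calc m' x ^ 2 / (ξ x : ℝ) ≤ (m x ^ 2 + 3 * (ξ x : ℝ) ^ 2 * ε) / (ξ x : ℝ) :=
              (div_le_div_iff_of_pos_right hξx).mpr hnum
          _ = m x ^ 2 / (ξ x : ℝ) + 3 * (ξ x : ℝ) * ε := by
              field_simp
      calc ∑ x ∈ ξ.support.erase z, m' x ^ 2 / (ξ x : ℝ)
          ≤ ∑ x ∈ ξ.support.erase z, (m x ^ 2 / (ξ x : ℝ) + 3 * (ξ x : ℝ) * ε) :=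
            Finset.sum_le_sum hterm
        _ = (∑ x ∈ ξ.support.erase z, m x ^ 2 / (ξ x : ℝ)) +
              ∑ x ∈ ξ.support.erase z, 3 * (ξ x : ℝ) * ε := Finset.sum_add_distrib
        _ ≤ (∑ x ∈ ξ.support.erase z, m x ^ 2 / (ξ x : ℝ)) +
              ∑ x ∈ ξ.support, 3 * (ξ x : ℝ) * ε := by
            refine add_le_add_right ?_ _
            refine Finset.sum_le_sum_of_subset_of_nonneg (Finset.erase_subset _ _)
              fun x hx _ => by positivity
        _ = (∑ x ∈ ξ.support.erase z, m x ^ 2 / (ξ x : ℝ)) +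
              ε * (∑ x ∈ ξ.support, 3 * (ξ x : ℝ)) := by
            rw [← Finset.sum_mul, mul_comm]
    have hboundZ : (if z ∈ ξ'.support then m' z ^ 2 / (ξ' z : ℝ) else 0) ≤
        T + ε * (3 * (ξ z : ℝ) ^ 2) := by
      by_cases h2 : z ∈ ξ'.support
      · simp only [hT, if_pos h2]
        have ha2R : (2:ℝ) ≤ (ξ z : ℝ) := by exact_mod_cast hz2.mp h2
        have ham1 : (1:ℝ) ≤ (ξ z : ℝ) - 1 := by linarith
        have hζ'cast : ((ξ' z : ℕ) : ℝ) = (ξ z : ℝ) - 1 := by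
          have hone : 1 ≤ ξ z := by exact_mod_cast haR
          rw [hξ', xi'_apply_self ξ z, Nat.cast_sub hone, Nat.cast_one]
        rw [hζ'cast]
        have hm'z : m' z = ∑ i ∈ t, w i * max ((ξ z : ℝ) - 1 - (ν i z : ℝ)) 0 := by
          rw [hm']
          refine Finset.sum_congr rfl fun i hi => ?_
          rw [hζ'cast]
        have hub1 : m' z ≤ ∑ i ∈ t, w i * max ((ξ z : ℝ) - (ν i z : ℝ)) 0 := by
          rw [hm'z]
          refine Finset.sum_le_sum fun i hi => ?_
          refine mul_le_mul_of_nonneg_left ?_ (hw0 i hi)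
          exact max_le_max (by linarith) le_rfl
        have hub2 : (∑ i ∈ t, w i * max ((ξ z : ℝ) - (ν i z : ℝ)) 0) ≤
            m z + (ξ z : ℝ) * ε := by
          have := (abs_le.mp (happ z hz)).2
          linarith
        have hub3 : m' z ≤ (ξ z : ℝ) - 1 := by
          rw [hm'z]
          calc ∑ i ∈ t, w i * max ((ξ z : ℝ) - 1 - (ν i z : ℝ)) 0
              ≤ ∑ i ∈ t, w i * ((ξ z : ℝ) - 1) := by
                refine Finset.sum_le_sum fun i hi => ?_
                refine mul_le_mul_of_nonneg_left ?_ (hw0 i hi)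
                refine max_le ?_ (by linarith)
                have : (0:ℝ) ≤ (ν i z : ℝ) := Nat.cast_nonneg _
                linarith
            _ = (ξ z : ℝ) - 1 := by rw [← Finset.sum_mul, hw1, one_mul]
        have hub : m' z ≤ M + (ξ z : ℝ) * ε := by
          rcases le_total (m z) ((ξ z : ℝ) - 1) with h | h
          · rw [hM, min_eq_left h]
            linarith [hub1.trans hub2]
          · rw [hM, min_eq_right h]
            have : (0:ℝ) ≤ (ξ z : ℝ) * ε := by positivity
            linarith
        have hM0 : 0 ≤ M := le_min hmz.1 (by linarith)
        have hMa : M ≤ (ξ z : ℝ) - 1 := min_le_right _ _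
        have hsqz : m' z ^ 2 ≤ (M + (ξ z : ℝ) * ε) ^ 2 :=
          pow_le_pow_left₀ (hm'_nonneg z) hub 2
        have hnum : m' z ^ 2 ≤ M ^ 2 + 3 * (ξ z : ℝ) ^ 2 * ε := by
          have hp1 : M * ((ξ z : ℝ) * ε) ≤ (ξ z : ℝ) * ((ξ z : ℝ) * ε) :=
            mul_le_mul_of_nonneg_right (by linarith) (by positivity)
          have hp2 : ((ξ z : ℝ) * ε) * ((ξ z : ℝ) * ε) ≤ ((ξ z : ℝ) * ε) * (ξ z : ℝ) := by
            refine mul_le_mul_of_nonneg_left ?_ (by positivity)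
            calc (ξ z : ℝ) * ε ≤ (ξ z : ℝ) * 1 := mul_le_mul_of_nonneg_left hε1 hζz.le
              _ = (ξ z : ℝ) := mul_one _
          nlinarith [hsqz, hp1, hp2]
        calc m' z ^ 2 / ((ξ z : ℝ) - 1)
            ≤ (M ^ 2 + 3 * (ξ z : ℝ) ^ 2 * ε) / ((ξ z : ℝ) - 1) :=
              (div_le_div_iff_of_pos_right (by linarith)).mpr hnum
          _ = M ^ 2 / ((ξ z : ℝ) - 1) + (3 * (ξ z : ℝ) ^ 2 * ε) / ((ξ z : ℝ) - 1) :=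
              add_div _ _ _
          _ ≤ M ^ 2 / ((ξ z : ℝ) - 1) + ε * (3 * (ξ z : ℝ) ^ 2) := by
              refine add_le_add_right ?_ _
              calc (3 * (ξ z : ℝ) ^ 2 * ε) / ((ξ z : ℝ) - 1) ≤ 3 * (ξ z : ℝ) ^ 2 * ε :=
                    div_le_self (by positivity) ham1
                _ = ε * (3 * (ξ z : ℝ) ^ 2) := by ring
      · simp only [hT, if_neg h2]
        have : (0:ℝ) ≤ ε * (3 * (ξ z : ℝ) ^ 2) := by positivity
        linarith
    calc dz ^ 2 ≤ R := hdzR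
      _ = _ := hsplit
      _ ≤ ((∑ x ∈ ξ.support.erase z, m x ^ 2 / (ξ x : ℝ)) +
            ε * (∑ x ∈ ξ.support, 3 * (ξ x : ℝ))) + (T + ε * (3 * (ξ z : ℝ) ^ 2)) :=
          add_le_add hboundE hboundZ
      _ = d ^ 2 - m z ^ 2 / (ξ z : ℝ) + T + ε * C := by
          rw [herase, hC]
          ring
  have step1' : dz ^ 2 ≤ d ^ 2 - m z ^ 2 / (ξ z : ℝ) + T := by
    refine le_of_forall_pos_le_add fun ε' hε' => ?_
    set ε := min 1 (ε' / (C + 1)) with hε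
    have hεpos : 0 < ε := lt_min one_pos (div_pos hε' (by linarith))
    have hεle : ε ≤ 1 := min_le_left _ _
    have h := step1 ε hεpos hεle
    have hεC : ε * C ≤ ε' := by
      calc ε * C ≤ (ε' / (C + 1)) * C :=
            mul_le_mul_of_nonneg_right (min_le_right _ _) hC0
        _ ≤ ε' := by
            rw [div_mul_eq_mul_div, div_le_iff₀ (by linarith)]
            nlinarith
    refine h.trans ?_
    have h9 := add_le_add_right hεC (d ^ 2 - m z ^ 2 / (ξ z : ℝ) + T)
    calc d ^ 2 - m z ^ 2 / (ξ z : ℝ) + T + ε * C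
        ≤ d ^ 2 - m z ^ 2 / (ξ z : ℝ) + T + ε' := h9
      _ = d ^ 2 - m z ^ 2 / (ξ z : ℝ) + T + ε' := rfl
  have step2 : T - m z ^ 2 / (ξ z : ℝ) ≤ 2 * m z / (ξ z : ℝ) := by
    by_cases h2 : z ∈ ξ'.support
    · simp only [hT, if_pos h2]
      have ha2R : (2:ℝ) ≤ (ξ z : ℝ) := by exact_mod_cast hz2.mp h2
      have ham1 : (0:ℝ) < (ξ z : ℝ) - 1 := by linarith
      have e1 : M ^ 2 / ((ξ z : ℝ) - 1) - m z ^ 2 / (ξ z : ℝ) =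
          (M ^ 2 * (ξ z : ℝ) - m z ^ 2 * ((ξ z : ℝ) - 1)) / ((ξ z : ℝ) * ((ξ z : ℝ) - 1)) := by
        field_simp
      have e2 : 2 * m z / (ξ z : ℝ) =
          (2 * m z * ((ξ z : ℝ) - 1)) / ((ξ z : ℝ) * ((ξ z : ℝ) - 1)) := by
        field_simp
      rw [e1, e2]
      refine (div_le_div_iff_of_pos_right (by positivity)).mpr ?_
      rcases le_total (m z) ((ξ z : ℝ) - 1) with h | h
      · rw [hM, min_eq_left h]
        nlinarith [hmz.1, h, ha2R]
      · rw [hM, min_eq_right h]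
        nlinarith [hmz.1, hmz.2, h, ha2R, sq_nonneg (m z - ((ξ z : ℝ) - 1))]
    · simp only [hT, if_neg h2]
      have e1 : (0:ℝ) - m z ^ 2 / (ξ z : ℝ) = (- (m z ^ 2)) / (ξ z : ℝ) := by ring
      have e2 : 2 * m z / (ξ z : ℝ) = (2 * m z) / (ξ z : ℝ) := rfl
      rw [e1, e2]
      refine (div_le_div_iff_of_pos_right hζz).mpr ?_
      nlinarith [hmz.1]
  linarith [step1', step2]
end SideB

end CDP

/-- Relation (8.3): the remove-one-point differences of the squared convex distance
satisfy `Σ_{z ∈ supp ξ} ξ(z)·(d_T(ξ,A)² − d_T(ξ − δ_z, A)²)² ≤ 4·d_T(ξ,A)²`. -/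
theorem convexDist_sq_remove_one_sq_sum_le {X : Type*} (ξ : X →₀ ℕ)
    (A : Set (X →₀ ℕ)) (hA : A.Nonempty) :
    ∑ z ∈ ξ.support,
      (ξ z : ℝ) *
        (convexDist ξ A ^ 2 - convexDist (ξ - Finsupp.single z 1) A ^ 2) ^ 2 ≤
      4 * convexDist ξ A ^ 2 := by
  classical
  obtain ⟨m, hbox, hsum, hvar, happrox⟩ := CDP.strong_duality hA ξ
  have key : ∀ z ∈ ξ.support,
      (convexDist ξ A ^ 2 - convexDist (ξ - Finsupp.single z 1) A ^ 2) ^ 2 ≤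
        (2 * m z / (ξ z : ℝ)) ^ 2 := by
    intro z hz
    have h1 := CDP.sideA hA ξ m (fun x hx => (hbox x hx).1) hsum hvar hz
    have h2 := CDP.sideB hA ξ m hbox hsum happrox hz
    refine sq_le_sq' ?_ h1
    linarith
  calc ∑ z ∈ ξ.support,
        (ξ z : ℝ) *
          (convexDist ξ A ^ 2 - convexDist (ξ - Finsupp.single z 1) A ^ 2) ^ 2
      ≤ ∑ z ∈ ξ.support, (ξ z : ℝ) * (2 * m z / (ξ z : ℝ)) ^ 2 :=
        Finset.sum_le_sum fun z hz =>
          mul_le_mul_of_nonneg_left (key z hz) (Nat.cast_nonneg _)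
    _ = ∑ z ∈ ξ.support, 4 * (m z ^ 2 / (ξ z : ℝ)) := by
        refine Finset.sum_congr rfl fun z hz => ?_
        have h0 := CDP.support_pos hz
        field_simp
        ring
    _ = 4 * ∑ z ∈ ξ.support, m z ^ 2 / (ξ z : ℝ) := by rw [Finset.mul_sum]
    _ = 4 * convexDist ξ A ^ 2 := by rw [hsum]
end

section
/- Let c > 0, α > 0, β > 0, and let (v_n) and (e_n) be sequences of nonnegative real numbers such that v_n/n³ → α and e_n/n² → β as n → ∞. Then there exist a constant C > 0 and a sequence (x_n) of nonnegative reals with x_n → ∞ such that for every n and every r ∈ [0, x_n], exp(−((v_n^{1/2}·r + e_n)^{1/4} − e_n^{1/4})²/(2c)) ≤ exp(−C·r²). -/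
open Filter

/-- Key algebraic fact: for `0 ≤ s ≤ t`, `t - s ≤ (t^{1/4} - s^{1/4}) * 4 * t^{3/4}`. -/
lemma quarter_pow_diff (t s : ℝ) (hs : 0 ≤ s) (hst : s ≤ t) :
    t - s ≤ (t ^ ((1 : ℝ)/4) - s ^ ((1 : ℝ)/4)) * (4 * (t ^ ((1 : ℝ)/4)) ^ 3) := by
  have ht : (0:ℝ) ≤ t := le_trans hs hst
  set a := t ^ ((1 : ℝ)/4) with ha
  set b := s ^ ((1 : ℝ)/4) with hb
  have ha0 : 0 ≤ a := Real.rpow_nonneg ht _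
  have hb0 : 0 ≤ b := Real.rpow_nonneg hs _
  have hba : b ≤ a := Real.rpow_le_rpow hs hst (by norm_num)
  have ha4 : a ^ (4:ℕ) = t := by
    rw [ha, ← Real.rpow_natCast (t ^ ((1:ℝ)/4)) 4, ← Real.rpow_mul ht]; norm_num
  have hb4 : b ^ (4:ℕ) = s := by
    rw [hb, ← Real.rpow_natCast (s ^ ((1:ℝ)/4)) 4, ← Real.rpow_mul hs]; norm_num
  nlinarith [mul_nonneg (sub_nonneg.2 hba) (mul_nonneg ha0 ha0),
    mul_nonneg (sub_nonneg.2 hba) (mul_nonneg hb0 hb0),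
    mul_nonneg (mul_nonneg (sub_nonneg.2 hba) ha0) hb0,
    mul_nonneg (mul_nonneg (sub_nonneg.2 hba) (sub_nonneg.2 hba)) (mul_nonneg ha0 hb0),
    sq_nonneg (a - b), sq_nonneg (a + b)]

set_option maxHeartbeats 1000000 in
/-- Consistency with the CLT (Theorem 6.6): if `v_n/n³ → α > 0` and `e_n/n² → β > 0`,
then there are `C > 0` and `x_n → ∞` such that for all `n` and all `r ∈ [0, x_n]`,
`exp(−((√v_n·r + e_n)^{1/4} − e_n^{1/4})²/(2c)) ≤ exp(−C·r²)`. -/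
theorem clt_consistency (c α β : ℝ) (hc : 0 < c) (hα : 0 < α) (hβ : 0 < β)
    (v e : ℕ → ℝ) (hv : ∀ n, 0 ≤ v n) (he : ∀ n, 0 ≤ e n)
    (hvlim : Tendsto (fun n => v n / (n : ℝ) ^ 3) atTop (nhds α))
    (helim : Tendsto (fun n => e n / (n : ℝ) ^ 2) atTop (nhds β)) :
    ∃ C : ℝ, 0 < C ∧ ∃ x : ℕ → ℝ, (∀ n, 0 ≤ x n) ∧
      Tendsto x atTop atTop ∧
      ∀ n : ℕ, ∀ r : ℝ, 0 ≤ r → r ≤ x n →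
        Real.exp (-((v n ^ ((1 : ℝ) / 2) * r + e n) ^ ((1 : ℝ) / 4)
              - e n ^ ((1 : ℝ) / 4)) ^ 2 / (2 * c)) ≤
          Real.exp (-C * r ^ 2) := by
  -- eventual bounds
  have hv1 : ∀ᶠ n in atTop, α/2 < v n / (n:ℝ)^3 :=
    hvlim.eventually (eventually_gt_nhds (by linarith))
  have hv2 : ∀ᶠ n in atTop, v n / (n:ℝ)^3 < 2*α :=
    hvlim.eventually (eventually_lt_nhds (by linarith))
  have he1 : ∀ᶠ n in atTop, β/2 < e n / (n:ℝ)^2 :=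
    helim.eventually (eventually_gt_nhds (by linarith))
  have he2 : ∀ᶠ n in atTop, e n / (n:ℝ)^2 < 2*β :=
    helim.eventually (eventually_lt_nhds (by linarith))
  have hall := (((hv1.and hv2).and (he1.and he2)).and (eventually_ge_atTop 1))
  rw [eventually_atTop] at hall
  obtain ⟨N, hN⟩ := hall
  -- cleaned up bounds for n ≥ N
  have hbounds : ∀ n ≥ N, (1:ℕ) ≤ n ∧ α/2 * (n:ℝ)^3 ≤ v n ∧ v n ≤ 2*α*(n:ℝ)^3 ∧
      β/2 * (n:ℝ)^2 ≤ e n ∧ e n ≤ 2*β*(n:ℝ)^2 := by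
    intro n hn
    obtain ⟨⟨⟨hA, hB⟩, hC, hD⟩, h1⟩ := hN n hn
    have hn1 : (1:ℝ) ≤ (n:ℝ) := by exact_mod_cast h1
    have h3 : (0:ℝ) < (n:ℝ)^3 := by positivity
    have h2 : (0:ℝ) < (n:ℝ)^2 := by positivity
    refine ⟨h1, ?_, ?_, ?_, ?_⟩
    · rw [lt_div_iff₀ h3] at hA; nlinarith
    · rw [div_lt_iff₀ h3] at hB; nlinarith
    · rw [lt_div_iff₀ h2] at hC; nlinarith
    · rw [div_lt_iff₀ h2] at hD; nlinarith
  set K : ℝ := α / (2 * (16 * (4*β) ^ ((3:ℝ)/2))) with hK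
  have hKpos : 0 < K := by
    have : (0:ℝ) < (4*β) ^ ((3:ℝ)/2) := Real.rpow_pos_of_pos (by linarith) _
    positivity
  refine ⟨K / (2*c), by positivity, fun n => if n < N then 0 else e n / v n ^ ((1:ℝ)/2),
    ?_, ?_, ?_⟩
  · intro n
    by_cases h : n < N <;> simp [h]
    exact div_nonneg (he n) (Real.rpow_nonneg (hv n) _)
  · -- tendsto atTop
    set k : ℝ := (β/2) / Real.sqrt (2*α) with hk
    have hkpos : 0 < k := by
      have : (0:ℝ) < Real.sqrt (2*α) := Real.sqrt_pos.2 (by linarith)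
      positivity
    apply tendsto_atTop_mono' atTop (f₁ := fun n : ℕ => k * Real.sqrt n)
    · rw [EventuallyLE, eventually_atTop]
      refine ⟨N, fun n hn => ?_⟩
      obtain ⟨h1, hvlo, hvhi, helo, hehi⟩ := hbounds n hn
      have hn1 : (1:ℝ) ≤ (n:ℝ) := by exact_mod_cast h1
      have hnn : (0:ℝ) ≤ (n:ℝ) := by linarith
      simp only [if_neg (Nat.not_lt.2 hn)]
      -- show k * √n ≤ e n / v n ^ (1/2)
      have hw : v n ^ ((1:ℝ)/2) = Real.sqrt (v n) := (Real.sqrt_eq_rpow _).symm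
      have hvpos : 0 < v n := lt_of_lt_of_le (by positivity) hvlo
      have hwpos : 0 < Real.sqrt (v n) := Real.sqrt_pos.2 hvpos
      rw [hw, le_div_iff₀ hwpos]
      have hsq : (k * Real.sqrt n * Real.sqrt (v n))^2 ≤ (e n)^2 := by
        have h1 : (Real.sqrt n)^2 = (n:ℝ) := Real.sq_sqrt hnn
        have h2 : (Real.sqrt (v n))^2 = v n := Real.sq_sqrt hvpos.le
        have h3 : k^2 = (β/2)^2 / (2*α) := by
          rw [hk, div_pow, Real.sq_sqrt (by linarith)]
        have h4 : (k * Real.sqrt n * Real.sqrt (v n))^2 = k^2 * (n:ℝ) * v n := by rw [mul_pow, mul_pow, h1, h2]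
        rw [h4, h3]
        have hen : β/2 * (n:ℝ)^2 ≤ e n := helo
        have : (β/2)^2 / (2*α) * (n:ℝ) * v n ≤ (β/2)^2 / (2*α) * (n:ℝ) * (2*α*(n:ℝ)^3) := by
          apply mul_le_mul_of_nonneg_left hvhi; positivity
        calc (β/2)^2 / (2*α) * (n:ℝ) * v n ≤ (β/2)^2 / (2*α) * (n:ℝ) * (2*α*(n:ℝ)^3) := this
          _ = ((β/2) * (n:ℝ)^2)^2 := by field_simp
          _ ≤ (e n)^2 := by nlinarith
      have hposl : 0 ≤ k * Real.sqrt n * Real.sqrt (v n) := by positivity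
      nlinarith [he n]
    · -- k * √n → ∞
      have h1 : Tendsto (fun x : ℝ => Real.sqrt x) atTop atTop := by
        have := tendsto_rpow_atTop (y := (1:ℝ)/2) (by norm_num)
        refine this.congr' ?_
        filter_upwards [eventually_ge_atTop (0:ℝ)] with x hx
        rw [Real.sqrt_eq_rpow]
      exact (h1.comp tendsto_natCast_atTop_atTop).const_mul_atTop hkpos
  · -- main inequality
    intro n r hr hrx
    by_cases hn : n < N
    · simp only [if_pos hn] at hrx
      have hr0 : r = 0 := le_antisymm hrx hr
      subst hr0
      simp
    · push_neg at hn
      simp only [if_neg (Nat.not_lt.2 hn)] at hrx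
      obtain ⟨h1, hvlo, hvhi, helo, hehi⟩ := hbounds n hn
      have hn1 : (1:ℝ) ≤ (n:ℝ) := by exact_mod_cast h1
      have hvpos : 0 < v n := lt_of_lt_of_le (by positivity) hvlo
      have hepos : 0 < e n := lt_of_lt_of_le (by positivity) helo
      set w := v n ^ ((1:ℝ)/2) with hwdef
      have hwpos : 0 < w := Real.rpow_pos_of_pos hvpos _
      have hw2 : w ^ 2 = v n := by
        rw [hwdef, ← Real.rpow_natCast (v n ^ ((1:ℝ)/2)) 2, ← Real.rpow_mul hvpos.le]
        norm_num
      have hwr : w * r ≤ e n := by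
        rw [le_div_iff₀ hwpos] at hrx
        linarith [hrx]
      set t := w * r + e n with htdef
      have hwr0 : 0 ≤ w * r := mul_nonneg hwpos.le hr
      have ht0 : 0 ≤ t := by positivity
      have hste : e n ≤ t := by rw [htdef]; linarith
      have key := quarter_pow_diff t (e n) hepos.le hste
      set a := t ^ ((1:ℝ)/4) with hadef
      set b := (e n) ^ ((1:ℝ)/4) with hbdef
      have hab : 0 ≤ a - b :=
        sub_nonneg.2 (Real.rpow_le_rpow hepos.le hste (by norm_num))
      have ha0 : 0 ≤ a := Real.rpow_nonneg ht0 _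
      have htub : t ≤ 4*β*(n:ℝ)^2 := by rw [htdef]; linarith
      set M := (4*β*(n:ℝ)^2) ^ ((1:ℝ)/4) with hMdef
      have hMpos : 0 < M := Real.rpow_pos_of_pos (by positivity) _
      have haM : a ≤ M := Real.rpow_le_rpow ht0 htub (by norm_num)
      have hG : (0:ℝ) < (4*β) ^ ((3:ℝ)/2) := Real.rpow_pos_of_pos (by linarith) _
      set G := (4*β) ^ ((3:ℝ)/2) with hGdef
      have hM6 : M^(6:ℕ) = G * (n:ℝ)^3 := by
        rw [hGdef]
        rw [hMdef, ← Real.rpow_natCast ((4*β*(n:ℝ)^2) ^ ((1:ℝ)/4)) 6,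
          ← Real.rpow_mul (by positivity)]
        norm_num
        rw [Real.mul_rpow (by positivity) (by positivity)]
        congr 1
        rw [← Real.rpow_natCast (n:ℝ) 2, ← Real.rpow_mul (n.cast_nonneg)]
        norm_num
      have key2 : w * r ≤ (a - b) * (4 * M^3) := by
        calc w * r = t - e n := by rw [htdef]; ring
          _ ≤ (a - b) * (4 * a^3) := key
          _ ≤ (a - b) * (4 * M^3) := by
              apply mul_le_mul_of_nonneg_left _ hab
              have := pow_le_pow_left₀ ha0 haM 3
              linarith
      have hsq : v n * r^2 ≤ (a - b)^2 * (16 * M^(6:ℕ)) := by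
        have h := pow_le_pow_left₀ hwr0 key2 2
        have hexp : ((a-b) * (4*M^3))^2 = (a-b)^2 * (16 * M^(6:ℕ)) := by ring
        have hwrsq : (w*r)^2 = v n * r^2 := by rw [mul_pow, hw2]
        rw [hwrsq, hexp] at h
        exact h
      rw [hM6] at hsq
      clear_value K w t a b M G
      have hn3 : (0:ℝ) < (n:ℝ)^3 := by positivity
      have hKr : K * r^2 ≤ (a - b)^2 := by
        have h1' : α/2 * (n:ℝ)^3 * r^2 ≤ v n * r^2 :=
          mul_le_mul_of_nonneg_right hvlo (sq_nonneg r)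
        have h2' : α/2 * (n:ℝ)^3 * r^2 ≤ (a-b)^2 * (16 * (G * (n:ℝ)^3)) :=
          le_trans h1' hsq
        have h3' : α/2 * r^2 * (n:ℝ)^3 ≤ ((a-b)^2 * (16 * G)) * (n:ℝ)^3 := by
          calc α/2 * r^2 * (n:ℝ)^3 = α/2 * (n:ℝ)^3 * r^2 := by ring
            _ ≤ (a-b)^2 * (16 * (G * (n:ℝ)^3)) := h2'
            _ = ((a-b)^2 * (16 * G)) * (n:ℝ)^3 := by ring
        have h4' : α/2 * r^2 ≤ (a-b)^2 * (16 * G) :=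
          le_of_mul_le_mul_right (by linarith only [h3']) hn3
        rw [hK, div_mul_eq_mul_div, div_le_iff₀ (by positivity)]
        linarith only [h4']
      rw [Real.exp_le_exp]
      have h2c : (0:ℝ) < 2*c := by linarith
      rw [neg_mul, neg_div, neg_le_neg_iff, div_mul_eq_mul_div]
      gcongr
end

section
/- Let (Ω, P) be a probability space, let X : Ω → ℕ be Poisson distributed with parameter m > 0, and let N be an integrable real random variable with N ≥ X(X−1)/2 almost surely. Let I : (0,∞) → (0,∞) satisfy I(r) → ∞ as r → ∞ and P(N ≥ E N + r) ≤ exp(−I(r)) for all r > 0. Then limsup_{r→∞} I(r)/(r^{1/2}·log r) ≤ 1/√2. -/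
open MeasureTheory Filter

open Topology

set_option maxHeartbeats 1600000

/-- Proposition 6.1 (optimality of upper-tail rates): let `X` be Poisson with mean
`m > 0`, let `N ≥ X(X−1)/2` a.s. be integrable, and let `I` satisfy `I(r) → ∞` and
`P(N ≥ EN + r) ≤ exp(−I(r))` for all `r > 0`. Then
`limsup_{r→∞} I(r)/(r^{1/2}·log r) ≤ 1/√2`. -/
theorem upper_tail_rate_optimal {Ω : Type*} [MeasurableSpace Ω]
    (P : Measure Ω) [IsProbabilityMeasure P]
    (m : ℝ) (hm : 0 < m) (X : Ω → ℕ)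
    (hX : ∀ k : ℕ, P {ω | X ω = k} =
      ENNReal.ofReal (Real.exp (-m) * m ^ k / (Nat.factorial k : ℝ)))
    (N : Ω → ℝ) (hN : Integrable N P)
    (hNX : ∀ᵐ ω ∂P, (X ω : ℝ) * ((X ω : ℝ) - 1) / 2 ≤ N ω)
    (I : ℝ → ℝ) (hIpos : ∀ r : ℝ, 0 < r → 0 < I r)
    (hItop : Tendsto I atTop atTop)
    (htail : ∀ r : ℝ, 0 < r →
      (P {ω | (∫ ω', N ω' ∂P) + r ≤ N ω}).toReal ≤ Real.exp (-I r)) :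
    limsup (fun r : ℝ => I r / (r ^ ((1 : ℝ) / 2) * Real.log r)) atTop ≤
      1 / Real.sqrt 2 := by
  set μ : ℝ := ∫ ω', N ω' ∂P with hμ
  -- Step 1: if k(k-1)/2 ≥ μ + r then the Poisson probability is below the tail bound
  have step1 : ∀ r : ℝ, 0 < r → ∀ k : ℕ, μ + r ≤ (k : ℝ) * ((k : ℝ) - 1) / 2 →
      Real.exp (-m) * m ^ k / (Nat.factorial k : ℝ) ≤ Real.exp (-I r) := by
    intro r hr k hk
    have hsub : {ω | X ω = k} ≤ᵐ[P] {ω | μ + r ≤ N ω} := by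
      filter_upwards [hNX] with ω hω hωk
      have hXk : X ω = k := hωk
      show μ + r ≤ N ω
      rw [hXk] at hω
      linarith
    have hmono : P {ω | X ω = k} ≤ P {ω | μ + r ≤ N ω} := measure_mono_ae hsub
    have h2 : (P {ω | X ω = k}).toReal ≤ (P {ω | μ + r ≤ N ω}).toReal :=
      ENNReal.toReal_mono (measure_ne_top P _) hmono
    rw [hX k, ENNReal.toReal_ofReal (by positivity)] at h2
    exact h2.trans (htail r hr)
  -- Step 2: consequently I r ≤ m + k log k + k |log m|
  have step2 : ∀ r : ℝ, 0 < r → ∀ k : ℕ, 1 ≤ k → μ + r ≤ (k : ℝ) * ((k : ℝ) - 1) / 2 →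
      I r ≤ m + (k : ℝ) * Real.log k + (k : ℝ) * |Real.log m| := by
    intro r hr k hk1 hk
    have h1 := step1 r hr k hk
    have hfac : (0 : ℝ) < (Nat.factorial k : ℝ) := by
      exact_mod_cast Nat.factorial_pos k
    have hp : (0 : ℝ) < Real.exp (-m) * m ^ k / (Nat.factorial k : ℝ) := by positivity
    have hlog := Real.log_le_log hp h1
    rw [Real.log_exp, Real.log_div (by positivity) hfac.ne',
      Real.log_mul (Real.exp_ne_zero _) (by positivity), Real.log_exp,
      Real.log_pow] at hlog
    -- hlog : -m + k * log m - log k! ≤ -I r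
    have hfle : (Nat.factorial k : ℝ) ≤ (k : ℝ) ^ k := by
      exact_mod_cast Nat.factorial_le_pow k
    have hlogfac : Real.log (Nat.factorial k : ℝ) ≤ (k : ℝ) * Real.log k := by
      have := Real.log_le_log hfac hfle
      rwa [Real.log_pow] at this
    have hkpos : (0 : ℝ) ≤ (k : ℝ) := Nat.cast_nonneg k
    have habs : -Real.log m ≤ |Real.log m| := neg_le_abs _
    have : (k : ℝ) * (-Real.log m) ≤ (k : ℝ) * |Real.log m| :=
      mul_le_mul_of_nonneg_left habs hkpos
    nlinarith [this, hlogfac, hlog]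
  -- the constant used to shift the square root
  set c : ℕ := ⌈|μ|⌉₊ + 1 with hc
  have hcμ : |μ| + 1 ≤ (c : ℝ) := by
    have := Nat.le_ceil |μ|
    push_cast [hc]
    linarith
  have hc0 : (0 : ℝ) ≤ (c : ℝ) := Nat.cast_nonneg c
  -- key deterministic bound for r ≥ 2
  have key : ∀ r : ℝ, 2 ≤ r →
      I r ≤ m + (Real.sqrt (2 * r) + c + 1) *
        (Real.log (Real.sqrt (2 * r) + c + 1) + |Real.log m|) := by
    intro r hr
    have hr0 : (0 : ℝ) < r := by linarith
    set s : ℝ := Real.sqrt (2 * r) with hs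
    have hs0 : 0 ≤ s := Real.sqrt_nonneg _
    have hs2 : (2 : ℝ) ≤ s := by
      have h4 : (4 : ℝ) ≤ 2 * r := by linarith
      have := Real.sqrt_le_sqrt h4
      have h2 : Real.sqrt 4 = 2 := by
        rw [show (4 : ℝ) = 2 ^ 2 by norm_num, Real.sqrt_sq (by norm_num : (0:ℝ) ≤ 2)]
      linarith [h2 ▸ this]
    have hssq : s * s = 2 * r := Real.mul_self_sqrt (by linarith)
    set k : ℕ := ⌈s⌉₊ + c with hkdef
    have hks : s + c ≤ (k : ℝ) := by
      have := Nat.le_ceil s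
      push_cast [hkdef]
      linarith
    have hk1 : (k : ℝ) ≤ s + c + 1 := by
      have := Nat.ceil_lt_add_one hs0
      push_cast [hkdef]
      linarith
    have hknat : 1 ≤ k := by
      have : 1 ≤ c := Nat.le_add_left 1 _
      omega
    have hμabs : μ ≤ |μ| := le_abs_self μ
    have habs0 : (0 : ℝ) ≤ |μ| := abs_nonneg μ
    have hcond : μ + r ≤ (k : ℝ) * ((k : ℝ) - 1) / 2 := by
      nlinarith [hks, hssq, hs2, hcμ, hμabs, habs0,
        mul_le_mul_of_nonneg_left hks (by linarith : (0:ℝ) ≤ s + c - 1)]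
    have h2 := step2 r hr0 k hknat hcond
    -- now replace k by the larger s + c + 1
    have hkr1 : (1 : ℝ) ≤ (k : ℝ) := by exact_mod_cast hknat
    have hK1 : (1 : ℝ) ≤ s + c + 1 := by linarith
    have hlogk : Real.log k ≤ Real.log (s + c + 1) :=
      Real.log_le_log (by linarith) hk1
    have hlogk0 : 0 ≤ Real.log (k : ℝ) := Real.log_nonneg hkr1
    have hlm0 : 0 ≤ |Real.log m| := abs_nonneg _
    have hmul : (k : ℝ) * (Real.log k + |Real.log m|) ≤
        (s + c + 1) * (Real.log (s + c + 1) + |Real.log m|) := by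
      have h0k : (0 : ℝ) ≤ (k : ℝ) := by linarith
      exact mul_le_mul hk1 (by linarith) (by linarith) (by linarith)
    nlinarith [h2, hmul]
  -- the comparison function G tending to 1/√2
  set D : ℝ := Real.log (Real.sqrt 2 + c + 1) + |Real.log m| with hD
  set G : ℝ → ℝ := fun r => m / (Real.sqrt r * Real.log r) +
      (Real.sqrt 2 + ((c : ℝ) + 1) / Real.sqrt r) * (1 / 2 + D / Real.log r) with hG
  have hsqrt_tendsto : Tendsto (fun r : ℝ => Real.sqrt r) atTop atTop := by
    simpa [Real.sqrt_eq_rpow] using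
      tendsto_rpow_atTop (show (0:ℝ) < 1/2 by norm_num)
  have hlog_tendsto : Tendsto Real.log atTop atTop := Real.tendsto_log_atTop
  have hGlim : Tendsto G atTop (𝓝 (1 / Real.sqrt 2)) := by
    have hA : Tendsto (fun r : ℝ => m / (Real.sqrt r * Real.log r)) atTop (𝓝 0) :=
      tendsto_const_nhds.div_atTop (hsqrt_tendsto.atTop_mul_atTop₀ hlog_tendsto)
    have hB : Tendsto (fun r : ℝ => Real.sqrt 2 + ((c : ℝ) + 1) / Real.sqrt r) atTop
        (𝓝 (Real.sqrt 2 + 0)) :=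
      tendsto_const_nhds.add (tendsto_const_nhds.div_atTop hsqrt_tendsto)
    have hC : Tendsto (fun r : ℝ => 1 / 2 + D / Real.log r) atTop (𝓝 (1 / 2 + 0)) :=
      tendsto_const_nhds.add (tendsto_const_nhds.div_atTop hlog_tendsto)
    have := hA.add (hB.mul hC)
    have heq : (0 : ℝ) + (Real.sqrt 2 + 0) * (1 / 2 + 0) = 1 / Real.sqrt 2 := by
      have h2 : Real.sqrt 2 * Real.sqrt 2 = 2 := Real.mul_self_sqrt (by norm_num)
      have hne : Real.sqrt 2 ≠ 0 := by
        intro h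
        rw [h] at h2
        norm_num at h2
      field_simp
      linear_combination h2
    rw [heq] at this
    exact this
  -- eventual comparison
  have hfG : ∀ᶠ r in atTop, I r / (r ^ ((1 : ℝ) / 2) * Real.log r) ≤ G r := by
    filter_upwards [eventually_ge_atTop (2 : ℝ)] with r hr
    have hr0 : (0 : ℝ) < r := by linarith
    have hsq1 : (1 : ℝ) ≤ Real.sqrt r := by
      have := Real.sqrt_le_sqrt (show (1:ℝ) ≤ r by linarith)
      rwa [Real.sqrt_one] at this
    have hsqpos : (0 : ℝ) < Real.sqrt r := by linarith
    have hlogr : 0 < Real.log r := Real.log_pos (by linarith)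
    have hrpow : r ^ ((1 : ℝ) / 2) = Real.sqrt r := (Real.sqrt_eq_rpow r).symm
    rw [hrpow]
    have hden : 0 < Real.sqrt r * Real.log r := mul_pos hsqpos hlogr
    have hkey := key r hr
    rw [Real.sqrt_mul (by norm_num : (0:ℝ) ≤ 2) r] at hkey
    set sr := Real.sqrt r with hsr
    set s2 := Real.sqrt 2 with hs2def
    have hs20 : (0 : ℝ) ≤ s2 := Real.sqrt_nonneg 2
    -- log bound
    have hKpos : (0 : ℝ) < s2 * sr + c + 1 := by positivity
    have hle : s2 * sr + (c : ℝ) + 1 ≤ (s2 + c + 1) * sr := by nlinarith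
    have hlogK : Real.log (s2 * sr + c + 1) ≤
        Real.log (s2 + c + 1) + 1 / 2 * Real.log r := by
      have h1 : Real.log (s2 * sr + c + 1) ≤ Real.log ((s2 + c + 1) * sr) :=
        Real.log_le_log hKpos hle
      have h2 : Real.log ((s2 + c + 1) * sr) =
          Real.log (s2 + c + 1) + Real.log sr := by
        rw [Real.log_mul (by positivity) (by positivity)]
      have h3 : Real.log sr = Real.log r / 2 := Real.log_sqrt hr0.le
      rw [h2, h3] at h1
      linarith
    have hBnn : (0 : ℝ) ≤ s2 * sr + (c : ℝ) + 1 := hKpos.le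
    have hmain : m + (s2 * sr + c + 1) * (Real.log (s2 * sr + c + 1) + |Real.log m|) ≤
        G r * (sr * Real.log r) := by
      have hexpand : G r * (sr * Real.log r) =
          m + (s2 * sr + ((c : ℝ) + 1)) *
            (1 / 2 * Real.log r + (Real.log (s2 + c + 1) + |Real.log m|)) := by
        rw [hG, hD]
        field_simp
        ring
      rw [hexpand]
      have := mul_le_mul_of_nonneg_left
        (show Real.log (s2 * sr + c + 1) + |Real.log m| ≤
          1 / 2 * Real.log r + (Real.log (s2 + c + 1) + |Real.log m|) by linarith)
        hBnn
      nlinarith [this]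
    rw [div_le_iff₀ hden]
    exact hkey.trans hmain
  -- conclude via limsup
  have hco : IsCoboundedUnder (· ≤ ·) atTop
      (fun r : ℝ => I r / (r ^ ((1 : ℝ) / 2) * Real.log r)) := by
    apply isCoboundedUnder_le_of_eventually_le atTop (x := 0)
    filter_upwards [eventually_ge_atTop (2 : ℝ)] with r hr
    have hr0 : (0 : ℝ) < r := by linarith
    have hlogr : 0 < Real.log r := Real.log_pos (by linarith)
    have hpow : (0 : ℝ) < r ^ ((1 : ℝ) / 2) := Real.rpow_pos_of_pos hr0 _
    exact div_nonneg (hIpos r hr0).le (mul_nonneg hpow.le hlogr.le)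
  have hGbd : IsBoundedUnder (· ≤ ·) atTop G := hGlim.isBoundedUnder_le
  calc limsup (fun r : ℝ => I r / (r ^ ((1 : ℝ) / 2) * Real.log r)) atTop
      ≤ limsup G atTop := limsup_le_limsup hfG hco hGbd
    _ = 1 / Real.sqrt 2 := hGlim.limsup_eq
end

section
/- Let (Ω, P) be a probability space, let X : Ω → ℕ be Poisson distributed with parameter m > 0, and let N be an integrable real random variable with N ≥ X(X−1)/2 almost surely. Let I : (0,∞) → (0,∞) satisfy P(N ≥ E N + r) ≤ exp(−I(r)) for all r > 0, and suppose there are constants a > 0 and b > 0 such that I(r)/r^a → b as r → ∞. Then a ≤ 1/2. -/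
open MeasureTheory Filter

/-- Corollary 6.2: let `X` be Poisson with mean `m > 0`, let `N ≥ X(X−1)/2` a.s. be
integrable, and let `I` satisfy `P(N ≥ EN + r) ≤ exp(−I(r))` for all `r > 0`.
If `I(r)/r^a → b` as `r → ∞` for constants `a, b > 0`, then `a ≤ 1/2`. -/
theorem upper_tail_exponent_le_half {Ω : Type*} [MeasurableSpace Ω]
    (P : Measure Ω) [IsProbabilityMeasure P]
    (m : ℝ) (hm : 0 < m) (X : Ω → ℕ)
    (hX : ∀ k : ℕ, P {ω | X ω = k} =
      ENNReal.ofReal (Real.exp (-m) * m ^ k / (Nat.factorial k : ℝ)))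
    (N : Ω → ℝ) (hN : Integrable N P)
    (hNX : ∀ᵐ ω ∂P, (X ω : ℝ) * ((X ω : ℝ) - 1) / 2 ≤ N ω)
    (I : ℝ → ℝ) (hIpos : ∀ r : ℝ, 0 < r → 0 < I r)
    (htail : ∀ r : ℝ, 0 < r →
      (P {ω | (∫ ω', N ω' ∂P) + r ≤ N ω}).toReal ≤ Real.exp (-I r))
    (a b : ℝ) (ha : 0 < a) (hb : 0 < b)
    (hlim : Tendsto (fun r : ℝ => I r / r ^ a) atTop (nhds b)) :
    a ≤ 1 / 2 := by
  by_contra hcon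
  push_neg at hcon
  set E : ℝ := ∫ ω', N ω' ∂P with hE
  set c : ℝ := |Real.log m| with hc
  set r : ℕ → ℝ := fun k => (k : ℝ) * ((k : ℝ) - 1) / 2 - E with hr
  have ht : 0 < 2 * a - 1 := by linarith
  -- r tends to atTop
  have hrt : Tendsto r atTop atTop := by
    apply tendsto_atTop_mono' atTop
      (show ∀ᶠ k : ℕ in atTop, (k : ℝ) - E ≤ r k from ?_)
      (tendsto_atTop_add_const_right atTop (-E) tendsto_natCast_atTop_atTop)
    filter_upwards [tendsto_natCast_atTop_atTop.eventually_ge_atTop (3 : ℝ)] with k hk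
    simp only [hr]
    nlinarith
  have hF : Tendsto (fun k : ℕ => I (r k) / (r k) ^ a) atTop (nhds b) := hlim.comp hrt
  -- the dominating function
  set H : ℝ → ℝ := fun x => (m + x * Real.log x + x * c) / (x ^ 2 / 4) ^ a with hH
  -- H tends to 0
  have halg : ∀ x : ℝ, 1 < x →
      H x = 4 ^ a * m * x ^ (-(2 * a)) + 4 ^ a * Real.log x * x ^ (-(2 * a - 1))
        + 4 ^ a * c * x ^ (-(2 * a - 1)) := by
    intro x hx
    have hx0 : (0 : ℝ) < x := by linarith
    have h1 : (x ^ 2 / 4 : ℝ) ^ a = x ^ (2 * a) / (4 : ℝ) ^ a := by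
      rw [Real.div_rpow (by positivity) (by norm_num)]
      congr 1
      rw [← Real.rpow_natCast x 2, ← Real.rpow_mul hx0.le]
      norm_num
    have h2 : x ^ (2 * a) = x * x ^ (2 * a - 1) := by
      have h2' := Real.rpow_add hx0 1 (2 * a - 1)
      rw [Real.rpow_one, show (1 + (2 * a - 1) : ℝ) = 2 * a by ring] at h2'
      exact h2'
    have hy : (0 : ℝ) < x ^ (2 * a - 1) := Real.rpow_pos_of_pos hx0 _
    have h4 : (0 : ℝ) < (4 : ℝ) ^ a := by positivity
    rw [hH]
    simp only
    rw [h1, Real.rpow_neg hx0.le, Real.rpow_neg hx0.le, h2]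
    rw [mul_inv]
    field_simp
  have hH0 : Tendsto H atTop (nhds 0) := by
    have t1 : Tendsto (fun x : ℝ => 4 ^ a * m * x ^ (-(2 * a))) atTop (nhds 0) := by
      simpa using (tendsto_rpow_neg_atTop (by linarith : (0:ℝ) < 2 * a)).const_mul (4 ^ a * m)
    have t2 : Tendsto (fun x : ℝ => 4 ^ a * Real.log x * x ^ (-(2 * a - 1))) atTop (nhds 0) := by
      have := (isLittleO_log_rpow_atTop ht).tendsto_div_nhds_zero
      have t2' : Tendsto (fun x : ℝ => Real.log x * x ^ (-(2 * a - 1))) atTop (nhds 0) := by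
        apply this.congr'
        filter_upwards [eventually_gt_atTop (0 : ℝ)] with x hx
        rw [Real.rpow_neg hx.le, div_eq_mul_inv]
      simpa [mul_assoc] using t2'.const_mul ((4:ℝ) ^ a)
    have t3 : Tendsto (fun x : ℝ => 4 ^ a * c * x ^ (-(2 * a - 1))) atTop (nhds 0) := by
      simpa using (tendsto_rpow_neg_atTop ht).const_mul (4 ^ a * c)
    have := (t1.add t2).add t3
    simp only [add_zero] at this
    apply this.congr'
    filter_upwards [eventually_gt_atTop (1 : ℝ)] with x hx
    exact (halg x hx).symm
  have hHn : Tendsto (fun k : ℕ => H (k : ℝ)) atTop (nhds 0) :=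
    hH0.comp tendsto_natCast_atTop_atTop
  -- eventual comparison
  have hcomp : ∀ᶠ k : ℕ in atTop, I (r k) / (r k) ^ a ≤ H (k : ℝ) := by
    filter_upwards [tendsto_natCast_atTop_atTop.eventually_ge_atTop (4 * |E| + 4 : ℝ)]
      with k hk
    have hx1 : (1 : ℝ) ≤ (k : ℝ) := by
      have : (0:ℝ) ≤ |E| := abs_nonneg E
      linarith
    have hx0 : (0 : ℝ) < (k : ℝ) := by linarith
    have hrge : (k : ℝ) ^ 2 / 4 ≤ r k := by
      simp only [hr]
      have h1 : E ≤ |E| := le_abs_self E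
      have h2 : (0:ℝ) ≤ |E| := abs_nonneg E
      nlinarith [mul_le_mul_of_nonneg_left hk hx0.le]
    have hrpos : 0 < r k := by
      have h0 : (0:ℝ) < (k:ℝ) ^ 2 / 4 := by positivity
      exact h0.trans_le hrge
    -- Poisson lower bound on tail probability
    have hp : (0 : ℝ) < Real.exp (-m) * m ^ k / (Nat.factorial k : ℝ) := by positivity
    have hsub : P {ω | X ω = k} ≤ P {ω | E + r k ≤ N ω} := by
      apply measure_mono_ae
      filter_upwards [hNX] with ω hω hωk
      have hXk : X ω = k := hωk
      rw [hXk] at hω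
      have : E + r k = (k : ℝ) * ((k : ℝ) - 1) / 2 := by
        show E + ((k : ℝ) * ((k : ℝ) - 1) / 2 - E) = _
        ring
      show E + r k ≤ N ω
      rw [this]
      exact hω
    have h2 : Real.exp (-m) * m ^ k / (Nat.factorial k : ℝ)
        ≤ (P {ω | E + r k ≤ N ω}).toReal := by
      rw [← ENNReal.toReal_ofReal hp.le]
      exact ENNReal.toReal_mono (measure_ne_top P _) (by rw [← hX k]; exact hsub)
    have h3 : Real.exp (-m) * m ^ k / (Nat.factorial k : ℝ) ≤ Real.exp (-I (r k)) :=
      h2.trans (htail (r k) hrpos)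
    have h4 : Real.log (Real.exp (-m) * m ^ k / (Nat.factorial k : ℝ)) ≤ -I (r k) := by
      rw [← Real.log_exp (-I (r k))]
      exact Real.log_le_log hp h3
    have h5 : Real.log (Real.exp (-m) * m ^ k / (Nat.factorial k : ℝ))
        = -m + k * Real.log m - Real.log (Nat.factorial k : ℝ) := by
      rw [Real.log_div (by positivity) (by positivity),
        Real.log_mul (Real.exp_ne_zero _) (by positivity), Real.log_exp, Real.log_pow]
    have hfact : Real.log (Nat.factorial k : ℝ) ≤ k * Real.log k := by
      calc Real.log (Nat.factorial k : ℝ) ≤ Real.log ((k : ℝ) ^ k) := by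
            apply Real.log_le_log (by positivity)
            exact_mod_cast Nat.factorial_le_pow k
        _ = k * Real.log k := Real.log_pow k _
    have hlogm : -((k : ℝ) * Real.log m) ≤ k * c := by
      rw [hc]
      have := neg_abs_le (Real.log m)
      nlinarith
    have hIle : I (r k) ≤ m + (k : ℝ) * Real.log (k : ℝ) + (k : ℝ) * c := by
      rw [h5] at h4
      nlinarith
    have hlogk : 0 ≤ Real.log (k : ℝ) := Real.log_nonneg hx1
    have hnum : (0 : ℝ) ≤ m + (k : ℝ) * Real.log (k : ℝ) + (k : ℝ) * c := by
      have : (0:ℝ) ≤ c := abs_nonneg _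
      nlinarith
    have hd1 : (0 : ℝ) < ((k : ℝ) ^ 2 / 4) ^ a := by positivity
    have hd2 : ((k : ℝ) ^ 2 / 4) ^ a ≤ (r k) ^ a :=
      Real.rpow_le_rpow (by positivity) hrge ha.le
    exact div_le_div₀ hnum hIle hd1 hd2
  have hble : b ≤ 0 := le_of_tendsto_of_tendsto hF hHn hcomp
  linarith
end
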